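/- arXiv:2208.12406 — 8 statements merged into one kernel-verified Lean document; each statement's English description precedes it below -/
import Mathlib

section
/- Let V₁ and V₂ be affine varieties in ℂ^d. If the ideal I(V₁) + I(V₂) is not radical, then there exist polynomials p₁, p₂ ∈ ℂ[x₁,…,x_d] agreeing on V₁ ∩ V₂ for which no polynomial f satisfies f = p₁ on V₁ and f = p₂ on V₂. -/
open MvPolynomial

theorem no_interpolation_of_nonradical_sum {d : ℕ}
    (V₁ V₂ : Set (Fin d → ℂ))
    (hV₁ : ∃ J : Ideal (MvPolynomial (Fin d) ℂ), V₁ = zeroLocus ℂ J)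
    (hV₂ : ∃ J : Ideal (MvPolynomial (Fin d) ℂ), V₂ = zeroLocus ℂ J)
    (hnonrad : ¬ (vanishingIdeal ℂ V₁ + vanishingIdeal ℂ V₂).IsRadical) :
    ∃ p₁ p₂ : MvPolynomial (Fin d) ℂ,
      (∀ x ∈ V₁ ∩ V₂, eval x p₁ = eval x p₂) ∧
      ¬ ∃ f : MvPolynomial (Fin d) ℂ,
          (∀ x ∈ V₁, eval x f = eval x p₁) ∧ (∀ x ∈ V₂, eval x f = eval x p₂) := by
  rw [Ideal.IsRadical, SetLike.not_le_iff_exists] at hnonrad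
  obtain ⟨g, hgr, hgI⟩ := hnonrad
  obtain ⟨n, hgn⟩ := Ideal.mem_radical_iff.mp hgr
  refine ⟨g, 0, ?_, ?_⟩
  · intro x hx
    obtain ⟨a, ha, b, hb, hab⟩ := Submodule.mem_sup.mp hgn
    have h1 : eval x a = 0 := mem_vanishingIdeal_iff.mp ha x hx.1
    have h2 : eval x b = 0 := mem_vanishingIdeal_iff.mp hb x hx.2
    have : eval x (g ^ n) = 0 := by rw [← hab, map_add, h1, h2, add_zero]
    rw [map_pow] at this
    simpa using pow_eq_zero_iff'.mp this |>.1
  · rintro ⟨f, hf1, hf2⟩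
    apply hgI
    have h1 : g - f ∈ vanishingIdeal ℂ V₁ := by
      rw [mem_vanishingIdeal_iff]
      intro x hx
      show eval x _ = 0; rw [map_sub, hf1 x hx, sub_self]
    have h2 : f ∈ vanishingIdeal ℂ V₂ := by
      rw [mem_vanishingIdeal_iff]
      intro x hx
      show eval x _ = 0; rw [hf2 x hx, map_zero]
    have : g = (g - f) + f := by ring
    rw [this]
    exact Submodule.add_mem_sup h1 h2
end

section
/- Let V₁,…,Vₙ be affine varieties in ℂ^d such that for every m < n the ideal I(V₁ ∪ ⋯ ∪ V_m) + I(V_{m+1}) is radical. Then for every collection of polynomials p₁,…,pₙ with p_k = p_j on V_k ∩ V_j for all k, j, there exists a polynomial f such that f = p_k on V_k for k = 1,…,n. -/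
open MvPolynomial

lemma zeroLocus_inf_aux {d : ℕ} (I J : Ideal (MvPolynomial (Fin d) ℂ)) :
    zeroLocus ℂ (I ⊓ J) = zeroLocus ℂ I ∪ zeroLocus ℂ J := by
  apply Set.Subset.antisymm
  · intro x hx
    by_contra h
    rw [Set.mem_union, not_or] at h
    obtain ⟨h1, h2⟩ := h
    simp only [mem_zeroLocus_iff, not_forall] at h1 h2
    obtain ⟨q1, hq1, hq1x⟩ := h1
    obtain ⟨q2, hq2, hq2x⟩ := h2
    have : q1 * q2 ∈ I ⊓ J :=
      ⟨Ideal.mul_mem_right _ _ hq1, Ideal.mul_mem_left _ _ hq2⟩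
    have := hx _ this
    rw [map_mul] at this
    exact (mul_ne_zero hq1x hq2x) this
  · rintro x (hx | hx) q hq
    · exact hx q hq.1
    · exact hx q hq.2

lemma zeroLocus_radical_aux {d : ℕ} (I : Ideal (MvPolynomial (Fin d) ℂ)) :
    zeroLocus ℂ I.radical = zeroLocus ℂ I := by
  apply Set.Subset.antisymm
  · exact zeroLocus_anti_mono Ideal.le_radical
  · intro x hx q hq
    obtain ⟨n, hn⟩ := hq
    have := hx _ hn
    rw [map_pow] at this
    exact (pow_eq_zero_iff'.mp this).1

lemma zeroLocus_sup_aux {d : ℕ} (I J : Ideal (MvPolynomial (Fin d) ℂ)) :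
    zeroLocus ℂ (I + J) = zeroLocus ℂ I ∩ zeroLocus ℂ J := by
  apply Set.Subset.antisymm
  · intro x hx
    exact ⟨fun q hq => hx q (Ideal.mem_sup_left hq),
      fun q hq => hx q (Ideal.mem_sup_right hq)⟩
  · rintro x ⟨hx1, hx2⟩ q hq
    obtain ⟨a, ha, b, hb, rfl⟩ := Submodule.mem_sup.mp hq
    rw [map_add, hx1 a ha, hx2 b hb, add_zero]

theorem interpolation_of_nested_radical_sums {d n : ℕ}
    (V : Fin n → Set (Fin d → ℂ))
    (hV : ∀ j, ∃ J : Ideal (MvPolynomial (Fin d) ℂ), V j = zeroLocus ℂ J)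
    (hrad : ∀ m : Fin n,
      (vanishingIdeal ℂ (⋃ j : Fin n, ⋃ (_ : j < m), V j) + vanishingIdeal ℂ (V m)).IsRadical)
    (p : Fin n → MvPolynomial (Fin d) ℂ)
    (hagree : ∀ k j : Fin n, ∀ x ∈ V k ∩ V j, eval x (p k) = eval x (p j)) :
    ∃ f : MvPolynomial (Fin d) ℂ,
      ∀ k, ∀ x ∈ V k, eval x f = eval x (p k) := by
  -- set U m = union of V j for j.val < m
  set U : ℕ → Set (Fin d → ℂ) := fun m => ⋃ j : Fin n, ⋃ (_ : (j : ℕ) < m), V j with hU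
  have key : ∀ m : ℕ, m ≤ n →
      (∃ J : Ideal (MvPolynomial (Fin d) ℂ), U m = zeroLocus ℂ J) ∧
      (∃ f : MvPolynomial (Fin d) ℂ,
        ∀ k : Fin n, (k : ℕ) < m → ∀ x ∈ V k, eval x f = eval x (p k)) := by
    intro m
    induction m with
    | zero =>
      intro _
      constructor
      · refine ⟨⊤, ?_⟩
        rw [zeroLocus_top]
        simp [hU]
      · exact ⟨0, fun k hk => absurd hk (Nat.not_lt_zero _)⟩
    | succ m ih =>
      intro hm
      obtain ⟨⟨JW, hJW⟩, ⟨f, hf⟩⟩ := ih (Nat.le_of_succ_le hm)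
      set m' : Fin n := ⟨m, hm⟩ with hm'
      obtain ⟨Jm, hJm⟩ := hV m'
      -- U (m+1) = U m ∪ V m'
      have hUsucc : U (m + 1) = U m ∪ V m' := by
        apply Set.Subset.antisymm
        · intro x hx
          simp only [hU, Set.mem_iUnion] at hx
          obtain ⟨j, hj, hxj⟩ := hx
          rcases Nat.lt_succ_iff_lt_or_eq.mp hj with h | h
          · exact Or.inl (Set.mem_iUnion.mpr ⟨j, Set.mem_iUnion.mpr ⟨h, hxj⟩⟩)
          · right
            have : j = m' := Fin.ext h
            rwa [← this]
        · rintro x (hx | hx)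
          · simp only [hU, Set.mem_iUnion] at hx ⊢
            obtain ⟨j, hj, hxj⟩ := hx
            exact ⟨j, Nat.lt_succ_of_lt hj, hxj⟩
          · simp only [hU, Set.mem_iUnion]
            exact ⟨m', Nat.lt_succ_self m, hx⟩
      have hUm'eq : (⋃ j : Fin n, ⋃ (_ : j < m'), V j) = U m := by
        apply Set.iUnion_congr
        intro j
        congr 1
      -- hrad gives radicality
      have hradm := hrad m'
      rw [hUm'eq] at hradm
      -- f - p m' vanishes on U m ∩ V m'
      have hvan : f - p m' ∈ vanishingIdeal ℂ (U m ∩ V m') := by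
        intro x hx
        obtain ⟨hx1, hx2⟩ := hx
        simp only [hU, Set.mem_iUnion] at hx1
        obtain ⟨j, hj, hxj⟩ := hx1
        rw [map_sub, aeval_eq_eval, hf j hj x hxj, sub_eq_zero]
        exact hagree j m' x ⟨hxj, hx2⟩
      -- vanishingIdeal ℂ (U m ∩ V m') = vanishingIdeal ℂ (U m) + vanishingIdeal ℂ (V m')
      have hzl : U m ∩ V m' =
          zeroLocus ℂ (vanishingIdeal ℂ (U m) + vanishingIdeal ℂ (V m')) := by
        rw [zeroLocus_sup_aux]
        congr 1
        · rw [hJW, vanishingIdeal_zeroLocus_eq_radical, zeroLocus_radical_aux]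
        · rw [hJm, vanishingIdeal_zeroLocus_eq_radical, zeroLocus_radical_aux]
      have hideal : vanishingIdeal ℂ (U m ∩ V m') =
          vanishingIdeal ℂ (U m) + vanishingIdeal ℂ (V m') := by
        rw [hzl, vanishingIdeal_zeroLocus_eq_radical]
        exact hradm.radical
      rw [hideal] at hvan
      obtain ⟨a, ha, b, hb, hab⟩ := Submodule.mem_sup.mp hvan
      refine ⟨⟨JW ⊓ Jm, by rw [hUsucc, hJW, hJm, zeroLocus_inf_aux]⟩, f - a, ?_⟩
      intro k hk x hx
      rcases Nat.lt_succ_iff_lt_or_eq.mp hk with h | h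
      · rw [map_sub]
        have hxU : x ∈ U m := Set.mem_iUnion.mpr ⟨k, Set.mem_iUnion.mpr ⟨h, hx⟩⟩
        rw [show eval x a = 0 from ha x hxU, sub_zero]
        exact hf k h x hx
      · have hkm : k = m' := Fin.ext h
        rw [hkm]
        have h2 := congrArg (eval x) hab
        rw [map_add, map_sub, show eval x b = 0 from hb x (hkm ▸ hx), add_zero] at h2
        rw [map_sub, h2]
        ring
  obtain ⟨_, f, hf⟩ := key n le_rfl
  exact ⟨f, fun k x hx => hf k k.isLt x hx⟩
end

section
/- Let V₁,…,Vₙ be affine varieties in ℂ^d with vanishing ideals J_i = I(V_i), and let p₁,…,pₙ be polynomials such that for all i, j: p_i − p_j ∈ J_i + ⋂_{k ≠ i} J_k. Then there exists a polynomial f with f = p_i on V_i for all i = 1,…,n. -/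
open MvPolynomial

theorem interpolation_of_restricted_data {d n : ℕ}
    (V : Fin n → Set (Fin d → ℂ))
    (hV : ∀ i, ∃ J : Ideal (MvPolynomial (Fin d) ℂ), V i = zeroLocus ℂ J)
    (p : Fin n → MvPolynomial (Fin d) ℂ)
    (hdata : ∀ i j : Fin n,
      p i - p j ∈ vanishingIdeal ℂ (V i) + ⨅ k ∈ {k : Fin n | k ≠ i}, vanishingIdeal ℂ (V k)) :
    ∃ f : MvPolynomial (Fin d) ℂ,
      ∀ i, ∀ x ∈ V i, eval x f = eval x (p i) := by
  classical
  rcases Nat.eq_zero_or_pos n with hn | hn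
  · subst hn; exact ⟨0, fun i => i.elim0⟩
  have hnC : (n : ℂ) ≠ 0 := Nat.cast_ne_zero.mpr hn.ne'
  set c : ℂ := (n : ℂ)⁻¹ with hc
  set J : Fin n → Ideal (MvPolynomial (Fin d) ℂ) := fun i => vanishingIdeal ℂ (V i) with hJ
  set K : Fin n → Ideal (MvPolynomial (Fin d) ℂ) :=
    fun i => ⨅ k ∈ {k : Fin n | k ≠ i}, vanishingIdeal ℂ (V k) with hK
  have hdec : ∀ i, ∃ h ∈ J i, ∃ g ∈ K i, h + g = c • ∑ j, (p i - p j) := by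
    intro i
    have hmem : c • (∑ j, (p i - p j)) ∈
        vanishingIdeal ℂ (V i) + ⨅ k ∈ {k : Fin n | k ≠ i}, vanishingIdeal ℂ (V k) :=
      by rw [smul_eq_C_mul]
         exact Ideal.mul_mem_left _ _ (Submodule.sum_mem _ fun j _ => hdata i j)
    rw [hJ, hK]
    rw [Ideal.add_eq_sup, Submodule.mem_sup] at hmem
    exact hmem
  choose h hh g hg hsum using hdec
  refine ⟨c • ∑ k, p k + ∑ i, g i, ?_⟩
  intro i x hx
  have hvan : ∀ q ∈ J i, eval x q = 0 := fun q hq =>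
    (mem_vanishingIdeal_iff.mp hq) x hx
  have hgj : ∀ j, j ≠ i → eval x (g j) = 0 := by
    intro j hji
    apply hvan
    have : K j ≤ J i := by
      refine le_trans (biInf_le _ ?_) le_rfl
      exact hji.symm
    exact this (hg j)
  have hhe : eval x (h i) = 0 := hvan _ (hh i)
  have hge : eval x (g i) = eval x (p i) - c * ∑ k, eval x (p k) := by
    have := congrArg (eval x) (hsum i)
    simp only [map_add, smul_eval, map_sum, map_sub, hhe, zero_add] at this
    rw [this, Finset.sum_sub_distrib, Finset.sum_const, Finset.card_univ,
      Fintype.card_fin, nsmul_eq_mul, mul_sub]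
    rw [hc]
    field_simp
  simp only [map_add, smul_eval, map_sum, Finset.sum_eq_single_of_mem i (Finset.mem_univ i)
    (fun j _ hji => hgj j hji), hge]
  ring
end

section
/- In ℂ[x, y, z], let J₁ = ⟨z − x⟩, J₂ = ⟨z − y⟩, J₃ = ⟨x, y⟩. The polynomial f = z satisfies f = x on V(J₁), f = y on V(J₂), f = z on V(J₃); however, z − x ∉ (J₁ ∩ J₂) + J₃ = ⟨x, y, z²⟩. -/
open MvPolynomial


noncomputable def myEquiv : MvPolynomial (Fin 3) ℂ ≃ₐ[ℂ] Polynomial (MvPolynomial (Fin 2) ℂ) :=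
  (renameEquiv ℂ (Equiv.swap (0:Fin 3) 2)).trans (finSuccEquiv ℂ 2)

lemma e1 : myEquiv (X 2 - X 0) = Polynomial.X - Polynomial.C (X 1) := by
  simp only [myEquiv, AlgEquiv.trans_apply, renameEquiv_apply, map_sub, rename_X,
    Equiv.swap_apply_left, Equiv.swap_apply_right]
  rw [show (X 2 : MvPolynomial (Fin 3) ℂ) = X (Fin.succ 1) from rfl,
    finSuccEquiv_X_zero, finSuccEquiv_X_succ]

lemma e2 : myEquiv (X 2 - X 1) = Polynomial.X - Polynomial.C (X 0) := by
  simp only [myEquiv, AlgEquiv.trans_apply, renameEquiv_apply, map_sub, rename_X,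
    Equiv.swap_apply_left, Equiv.swap_apply_right]
  rw [show Equiv.swap (0:Fin 3) 2 1 = Fin.succ 0 from rfl,
    finSuccEquiv_X_zero, finSuccEquiv_X_succ]

lemma prime1 : Prime (X 2 - X 0 : MvPolynomial (Fin 3) ℂ) := by
  rw [← MulEquiv.prime_iff myEquiv]
  show Prime (myEquiv (X 2 - X 0))
  rw [e1]; exact Polynomial.prime_X_sub_C _

lemma prime2 : Prime (X 2 - X 1 : MvPolynomial (Fin 3) ℂ) := by
  rw [← MulEquiv.prime_iff myEquiv]
  show Prime (myEquiv (X 2 - X 1))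
  rw [e2]; exact Polynomial.prime_X_sub_C _

lemma not_dvd21 : ¬ ((X 2 - X 1 : MvPolynomial (Fin 3) ℂ) ∣ X 2 - X 0) := by
  rintro ⟨d, hd⟩
  have := congrArg (eval (fun i : Fin 3 => if i = 0 then (1:ℂ) else 0)) hd
  simp at this

lemma inter_eq : ((Ideal.span {X 2 - X 0} : Ideal (MvPolynomial (Fin 3) ℂ)) ⊓
    Ideal.span {X 2 - X 1}) = Ideal.span {(X 2 - X 0) * (X 2 - X 1)} := by
  ext p
  simp only [Ideal.mem_inf, Ideal.mem_span_singleton]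
  constructor
  · rintro ⟨⟨a, ha⟩, hb⟩
    rw [ha] at hb ⊢
    rcases (prime2.dvd_or_dvd hb) with h | h
    · exact absurd h not_dvd21
    · exact mul_dvd_mul_left _ h
  · rintro h
    exact ⟨(dvd_mul_right _ _).trans h, ((dvd_mul_left _ _).trans h)⟩

lemma ideal_eq : ((Ideal.span {X 2 - X 0} : Ideal (MvPolynomial (Fin 3) ℂ)) ⊓ Ideal.span {X 2 - X 1}) +
        Ideal.span {X 0, X 1} =
      (Ideal.span {X 0, X 1, (X 2) ^ 2} : Ideal (MvPolynomial (Fin 3) ℂ)) := by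
  rw [inter_eq, Submodule.add_eq_sup]
  set K : Ideal (MvPolynomial (Fin 3) ℂ) := Ideal.span {X 0, X 1, (X 2)^2} with hK
  have hx0 : (X 0 : MvPolynomial (Fin 3) ℂ) ∈ K := Ideal.subset_span (by simp)
  have hx1 : (X 1 : MvPolynomial (Fin 3) ℂ) ∈ K := Ideal.subset_span (by simp)
  have hz2 : ((X 2)^2 : MvPolynomial (Fin 3) ℂ) ∈ K := Ideal.subset_span (by simp)
  apply le_antisymm
  · apply sup_le
    · rw [Ideal.span_le, Set.singleton_subset_iff]
      have hgeq : (X 2 - X 0 : MvPolynomial (Fin 3) ℂ) * (X 2 - X 1) =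
          (-(X 2)) * X 0 + (X 0 - X 2) * X 1 + 1 * (X 2)^2 := by ring
      rw [SetLike.mem_coe, hgeq]
      exact K.add_mem (K.add_mem (K.mul_mem_left _ hx0) (K.mul_mem_left _ hx1))
        (K.mul_mem_left _ hz2)
    · exact (Ideal.span_mono (by intro t ht; simp at ht; rcases ht with h|h <;> simp [h]))
  · apply Ideal.span_le.mpr
    rintro q hq
    set L := Ideal.span {(X 2 - X 0 : MvPolynomial (Fin 3) ℂ) * (X 2 - X 1)} ⊔
      Ideal.span {X 0, X 1} with hL
    have hx0' : (X 0 : MvPolynomial (Fin 3) ℂ) ∈ L :=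
      Ideal.mem_sup_right (Ideal.subset_span (by simp))
    have hx1' : (X 1 : MvPolynomial (Fin 3) ℂ) ∈ L :=
      Ideal.mem_sup_right (Ideal.subset_span (by simp))
    have hz2' : ((X 2)^2 : MvPolynomial (Fin 3) ℂ) ∈ L := by
      have hgmem : (X 2 - X 0 : MvPolynomial (Fin 3) ℂ) * (X 2 - X 1) ∈ L :=
        Ideal.mem_sup_left (Ideal.subset_span rfl)
      have heq : ((X 2)^2 : MvPolynomial (Fin 3) ℂ) =
          (X 2 - X 0) * (X 2 - X 1) + (X 2 * X 0 + (X 2 - X 0) * X 1) := by ring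
      rw [heq]
      exact L.add_mem hgmem (L.add_mem (L.mul_mem_left _ hx0') (L.mul_mem_left _ hx1'))
    simp only [Set.mem_insert_iff, Set.mem_singleton_iff] at hq
    rcases hq with h|h|h <;> (rw [h]; assumption)

theorem sufficient_condition_not_necessary :
    (∀ x ∈ zeroLocus ℂ (Ideal.span {X 2 - X 0} : Ideal (MvPolynomial (Fin 3) ℂ)),
        eval x (X 2 : MvPolynomial (Fin 3) ℂ) = eval x (X 0 : MvPolynomial (Fin 3) ℂ)) ∧
    (∀ x ∈ zeroLocus ℂ (Ideal.span {X 2 - X 1} : Ideal (MvPolynomial (Fin 3) ℂ)),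
        eval x (X 2 : MvPolynomial (Fin 3) ℂ) = eval x (X 1 : MvPolynomial (Fin 3) ℂ)) ∧
    (∀ x ∈ zeroLocus ℂ (Ideal.span {X 0, X 1} : Ideal (MvPolynomial (Fin 3) ℂ)),
        eval x (X 2 : MvPolynomial (Fin 3) ℂ) = eval x (X 2 : MvPolynomial (Fin 3) ℂ)) ∧
    ((Ideal.span {X 2 - X 0} : Ideal (MvPolynomial (Fin 3) ℂ)) ⊓ Ideal.span {X 2 - X 1}) +
        Ideal.span {X 0, X 1} =
      (Ideal.span {X 0, X 1, (X 2) ^ 2} : Ideal (MvPolynomial (Fin 3) ℂ)) ∧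
    (X 2 - X 0 : MvPolynomial (Fin 3) ℂ) ∉
      ((Ideal.span {X 2 - X 0} : Ideal (MvPolynomial (Fin 3) ℂ)) ⊓ Ideal.span {X 2 - X 1}) +
        Ideal.span {X 0, X 1} := by
  refine ⟨?_, ?_, fun x _ => rfl, ideal_eq, ?_⟩
  · intro x hx
    have h := hx _ (Ideal.subset_span rfl)
    rw [map_sub, sub_eq_zero] at h
    simpa using h
  · intro x hx
    have h := hx _ (Ideal.subset_span rfl)
    rw [map_sub, sub_eq_zero] at h
    simpa using h
  · rw [ideal_eq]
    intro hmem
    have h0 : aeval (fun i : Fin 3 => if i = 2 then (DualNumber.eps : DualNumber ℂ) else 0)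
        (X 2 - X 0 : MvPolynomial (Fin 3) ℂ) = 0 := by
      refine Submodule.span_induction (p := fun p _ => aeval (fun i : Fin 3 => if i = 2 then (DualNumber.eps : DualNumber ℂ) else 0) p = 0) ?_ ?_ ?_ ?_ hmem
      · rintro q hq
        simp only [Set.mem_insert_iff, Set.mem_singleton_iff] at hq
        rcases hq with h|h|h <;> simp [h, sq, DualNumber.eps_mul_eps]
      · simp
      · intro a b _ _ ha hb; simp [ha, hb]
      · intro a b _ hb
        show aeval _ (a • b) = 0
        simp [smul_eq_mul, hb]
    simp [sub_eq_zero] at h0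
    have := congrArg TrivSqZeroExt.snd h0
    simp [DualNumber.snd_eps] at this
end

section
/- Let L ∈ ℂ[x₁,…,x_d] be a nonzero polynomial whose lowest-degree nonvanishing monomial has degree l, and let L(D) be the corresponding constant-coefficient differential operator. Then L(D) maps the space of polynomials of degree at most n onto the space of polynomials of degree at most n − l. -/
open MvPolynomial

/-- The constant-coefficient differential operator `L(D)` obtained from a polynomial `L`
by substituting `∂/∂xⱼ` for `xⱼ`. -/
noncomputable def diffOp {d : ℕ} (L : MvPolynomial (Fin d) ℂ) :
    MvPolynomial (Fin d) ℂ →ₗ[ℂ] MvPolynomial (Fin d) ℂ :=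
  ∑ α ∈ L.support, L.coeff α •
    ((List.finRange d).map
      (fun j => ((pderiv j).toLinearMap : Module.End ℂ (MvPolynomial (Fin d) ℂ)) ^ (α j))).prod

/-- The lowest-degree non-vanishing monomial of `L` has degree `l`. -/
def lowestDegree {d : ℕ} (L : MvPolynomial (Fin d) ℂ) (l : ℕ) : Prop :=
  (∀ k < l, homogeneousComponent k L = 0) ∧ homogeneousComponent l L ≠ 0

variable {d : ℕ}

noncomputable def dpow (α : Fin d →₀ ℕ) : Module.End ℂ (MvPolynomial (Fin d) ℂ) :=
  ((List.finRange d).map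
    (fun j => ((pderiv j).toLinearMap : Module.End ℂ (MvPolynomial (Fin d) ℂ)) ^ (α j))).prod

lemma pderiv_pderiv (i j : Fin d) (f : MvPolynomial (Fin d) ℂ) :
    pderiv i (pderiv j f) = pderiv j (pderiv i f) := by
  induction f using MvPolynomial.induction_on' with
  | add p q hp hq => simp [map_add, hp, hq]
  | monomial s a =>
    rcases eq_or_ne i j with rfl | hij
    · rfl
    · simp only [pderiv_monomial]
      rw [Finsupp.tsub_apply, Finsupp.tsub_apply, Finsupp.single_eq_of_ne hij,
        Finsupp.single_eq_of_ne (Ne.symm hij)]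
      rw [tsub_tsub, tsub_tsub, add_comm]
      simp only [Nat.sub_zero]
      ring_nf

lemma pderiv_commute (i j : Fin d) :
    Commute ((pderiv i).toLinearMap : Module.End ℂ (MvPolynomial (Fin d) ℂ))
      ((pderiv j).toLinearMap) := by
  apply LinearMap.ext
  intro f
  exact pderiv_pderiv i j f

lemma commute_listprod (i : Fin d) (a : ℕ) (α : Fin d →₀ ℕ) (ℓ : List (Fin d)) :
    Commute (((pderiv i).toLinearMap : Module.End ℂ (MvPolynomial (Fin d) ℂ)) ^ a)
      ((ℓ.map (fun j => ((pderiv j).toLinearMap :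
          Module.End ℂ (MvPolynomial (Fin d) ℂ)) ^ (α j))).prod) := by
  apply Commute.list_prod_right
  intro y hy
  obtain ⟨j, -, rfl⟩ := List.mem_map.mp hy
  exact (pderiv_commute i j).pow_pow _ _

lemma dpow_zero : dpow (0 : Fin d →₀ ℕ) = 1 := by
  unfold dpow
  simp

lemma dpow_add (α β : Fin d →₀ ℕ) : dpow (α + β) = dpow α * dpow β := by
  unfold dpow
  generalize List.finRange d = ℓ
  induction ℓ with
  | nil => simp
  | cons j ℓ ih =>
    simp only [List.map_cons, List.prod_cons, Finsupp.add_apply, pow_add] at ih ⊢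
    rw [ih, mul_assoc, mul_assoc, ← mul_assoc (((pderiv j).toLinearMap :
        Module.End ℂ (MvPolynomial (Fin d) ℂ)) ^ β j),
      (commute_listprod j (β j) α ℓ).eq, mul_assoc]

noncomputable def dpowHom : Multiplicative (Fin d →₀ ℕ) →* Module.End ℂ (MvPolynomial (Fin d) ℂ) where
  toFun α := dpow (Multiplicative.toAdd α)
  map_one' := dpow_zero
  map_mul' α β := dpow_add _ _

noncomputable def Phi : MvPolynomial (Fin d) ℂ →ₐ[ℂ] Module.End ℂ (MvPolynomial (Fin d) ℂ) :=
  AddMonoidAlgebra.lift ℂ _ (Fin d →₀ ℕ) dpowHom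

lemma diffOp_eq (L : MvPolynomial (Fin d) ℂ) : diffOp L = Phi L := by
  rw [Phi]
  erw [AddMonoidAlgebra.lift_apply]
  rw [diffOp]
  rfl

lemma pderiv_pow_monomial (j : Fin d) (k : ℕ) (β : Fin d →₀ ℕ) (c : ℂ) :
    (((pderiv j).toLinearMap : Module.End ℂ (MvPolynomial (Fin d) ℂ)) ^ k) (monomial β c)
      = (((β j).descFactorial k : ℕ) : ℂ) • monomial (β - Finsupp.single j k) c := by
  induction k with
  | zero => simp
  | succ k ih =>
    rw [pow_succ', Module.End.mul_apply, ih, map_smul]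
    rw [show (((pderiv j).toLinearMap : Module.End ℂ (MvPolynomial (Fin d) ℂ))
        ((monomial (β - Finsupp.single j k)) c)) = pderiv j ((monomial (β - Finsupp.single j k)) c) from rfl,
      pderiv_monomial]
    rw [Finsupp.tsub_apply, Finsupp.single_eq_same]
    rw [tsub_tsub, ← Finsupp.single_add, Nat.descFactorial_succ]
    rw [← (monomial (β - Finsupp.single j (k + 1))).map_smul,
      ← (monomial (β - Finsupp.single j (k + 1))).map_smul]
    congr 1
    simp only [smul_eq_mul, Nat.cast_mul]
    ring

lemma listprod_monomial (α β : Fin d →₀ ℕ) (c : ℂ) (ℓ : List (Fin d)) (hℓ : ℓ.Nodup) :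
    ((ℓ.map (fun j => ((pderiv j).toLinearMap :
        Module.End ℂ (MvPolynomial (Fin d) ℂ)) ^ (α j))).prod) (monomial β c)
      = ((ℓ.map (fun j => (((β j).descFactorial (α j) : ℕ) : ℂ))).prod)
          • monomial (β - (ℓ.map (fun j => Finsupp.single j (α j))).sum) c := by
  induction ℓ with
  | nil => simp
  | cons j ℓ ih =>
    obtain ⟨hj, hℓ'⟩ := List.nodup_cons.mp hℓ
    simp only [List.map_cons, List.prod_cons, List.sum_cons, Module.End.mul_apply, ih hℓ']
    rw [map_smul, pderiv_pow_monomial]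
    have hS : (β - (ℓ.map (fun j => Finsupp.single j (α j))).sum) j = β j := by
      rw [Finsupp.tsub_apply]
      have : ((ℓ.map (fun i => Finsupp.single i (α i))).sum) j = 0 := by
        rw [← Finsupp.applyAddHom_apply, map_list_sum, List.map_map]
        apply List.sum_eq_zero
        intro x hx
        simp only [List.mem_map] at hx
        obtain ⟨i, him, rfl⟩ := hx
        simp only [Function.comp_apply, Finsupp.applyAddHom_apply]
        exact Finsupp.single_eq_of_ne (fun h => hj (by rw [h]; exact him))
      rw [this, Nat.sub_zero]
    rw [hS, tsub_tsub, smul_smul, mul_comm, add_comm]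

lemma dpow_monomial (α β : Fin d →₀ ℕ) (c : ℂ) :
    dpow α (monomial β c)
      = (∏ j, (((β j).descFactorial (α j) : ℕ) : ℂ)) • monomial (β - α) c := by
  rw [dpow, listprod_monomial α β c _ (List.nodup_finRange d), ← Fin.prod_univ_def,
    ← Fin.sum_univ_def, Finsupp.univ_sum_single]

lemma deg_univ (β : Fin d →₀ ℕ) : β.degree = ∑ j, β j :=
  Finset.sum_subset (Finset.subset_univ _) (fun x _ hx => Finsupp.notMem_support_iff.mp hx)

lemma degree_le_totalDegree {p : MvPolynomial (Fin d) ℂ} {s : Fin d →₀ ℕ}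
    (h : s ∈ p.support) : s.degree ≤ p.totalDegree :=
  le_totalDegree h

lemma dpow_totalDegree_le {f : MvPolynomial (Fin d) ℂ} {n l : ℕ} (hf : f.totalDegree ≤ n)
    (α : Fin d →₀ ℕ) (hα : l ≤ α.degree) : (dpow α f).totalDegree ≤ n - l := by
  conv_lhs => rw [f.as_sum]
  rw [map_sum]
  apply totalDegree_finsetSum_le
  intro β hβ
  rw [dpow_monomial]
  rcases eq_or_ne (∏ j, (((β j).descFactorial (α j) : ℕ) : ℂ)) 0 with h0 | h0
  · rw [h0, zero_smul]
    simp
  · refine (totalDegree_smul_le _ _).trans ((totalDegree_monomial_le _ _).trans ?_)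
    have hle : ∀ j, α j ≤ β j := by
      intro j
      by_contra hlt
      exact h0 (Finset.prod_eq_zero (Finset.mem_univ j)
        (by rw [Nat.descFactorial_eq_zero_iff_lt.mpr (Nat.lt_of_not_le hlt), Nat.cast_zero]))
    have : (β - α).degree = β.degree - α.degree := by
      rw [deg_univ, deg_univ, deg_univ]
      rw [show (∑ j, (β - α) j) = ∑ j, (β j - α j) from Finset.sum_congr rfl
        (fun j _ => Finsupp.tsub_apply β α j)]
      exact Finset.sum_tsub_distrib _ (fun j _ => hle j)
    calc ((β - α).sum fun _ e => e) = (β - α).degree := rfl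
      _ = β.degree - α.degree := this
      _ ≤ n - l := tsub_le_tsub (degree_le_totalDegree hβ |>.trans hf) hα

lemma dpow_eq_zero {f : MvPolynomial (Fin d) ℂ} {n : ℕ} (hf : f.totalDegree ≤ n)
    (α : Fin d →₀ ℕ) (hα : n < α.degree) : dpow α f = 0 := by
  conv_lhs => rw [f.as_sum]
  rw [map_sum]
  apply Finset.sum_eq_zero
  intro β hβ
  rw [dpow_monomial]
  have : ∃ j, β j < α j := by
    by_contra hc
    push_neg at hc
    have : α.degree ≤ β.degree := by
      rw [deg_univ, deg_univ]
      exact Finset.sum_le_sum (fun j _ => hc j)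
    exact absurd (this.trans ((degree_le_totalDegree hβ).trans hf)) (Nat.not_le.mpr hα)
  obtain ⟨j, hj⟩ := this
  rw [Finset.prod_eq_zero (Finset.mem_univ j)
    (by rw [Nat.descFactorial_eq_zero_iff_lt.mpr hj, Nat.cast_zero]), zero_smul]

lemma diffOp_apply (p f : MvPolynomial (Fin d) ℂ) :
    diffOp p f = ∑ α ∈ p.support, coeff α p • dpow α f := by
  rw [diffOp, LinearMap.sum_apply]
  rfl

lemma support_degree_ge {L : MvPolynomial (Fin d) ℂ} {l : ℕ}
    (h1 : ∀ k < l, homogeneousComponent k L = 0) {α : Fin d →₀ ℕ}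
    (hα : α ∈ L.support) : l ≤ α.degree := by
  by_contra hc
  push_neg at hc
  have := coeff_homogeneousComponent α.degree L α
  rw [if_pos rfl, h1 _ hc] at this
  exact (MvPolynomial.mem_support_iff.mp hα) (by simpa using this.symm)

lemma diffOp_totalDegree_le {L f : MvPolynomial (Fin d) ℂ} {l n : ℕ}
    (h1 : ∀ k < l, homogeneousComponent k L = 0) (hf : f.totalDegree ≤ n) :
    (diffOp L f).totalDegree ≤ n - l := by
  rw [diffOp_apply]
  apply totalDegree_finsetSum_le
  intro α hα
  exact (totalDegree_smul_le _ _).trans (dpow_totalDegree_le hf α (support_degree_ge h1 hα))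

lemma diffOp_eq_zero {L f : MvPolynomial (Fin d) ℂ} {l n : ℕ}
    (h1 : ∀ k < l, homogeneousComponent k L = 0) (hf : f.totalDegree ≤ n) (hn : n < l) :
    diffOp L f = 0 := by
  rw [diffOp_apply]
  apply Finset.sum_eq_zero
  intro α hα
  rw [dpow_eq_zero hf α (lt_of_lt_of_le hn (support_degree_ge h1 hα)), smul_zero]

lemma pairing_monomial (p : MvPolynomial (Fin d) ℂ) (β : Fin d →₀ ℕ) :
    coeff 0 (Phi p (monomial β 1)) = coeff β p * ∏ j, ((β j).factorial : ℂ) := by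
  rw [← diffOp_eq, diffOp_apply]
  rw [show coeff (0 : Fin d →₀ ℕ) (∑ α ∈ p.support, coeff α p • dpow α (monomial β 1))
      = ∑ α ∈ p.support, coeff 0 (coeff α p • dpow α (monomial β 1)) from
    map_sum (coeffAddMonoidHom 0) _ _]
  have hterm : ∀ α ∈ p.support, α ≠ β →
      coeff 0 (coeff α p • dpow α (monomial β 1)) = 0 := by
    intro α _ hne
    rw [dpow_monomial, coeff_smul, coeff_smul, coeff_monomial]
    rcases eq_or_ne (β - α) 0 with hz | hz
    · have hle : ∀ j, β j ≤ α j := fun j => by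
        have := DFunLike.congr_fun hz j
        rw [Finsupp.tsub_apply] at this
        exact tsub_eq_zero_iff_le.mp this
      have : ∃ j, β j < α j := by
        by_contra hc
        push_neg at hc
        exact hne (Finsupp.ext fun j => le_antisymm (hc j) (hle j))
      obtain ⟨j, hj⟩ := this
      rw [Finset.prod_eq_zero (Finset.mem_univ j)
        (by rw [Nat.descFactorial_eq_zero_iff_lt.mpr
          (Nat.lt_of_lt_of_le hj (Nat.le_of_eq rfl)), Nat.cast_zero])]
      simp
    · rw [if_neg (fun h => hz (by rw [← h]))]
      simp
  rw [Finset.sum_eq_single β hterm (fun hβ => by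
    rw [MvPolynomial.notMem_support_iff.mp hβ, zero_smul]; simp)]
  rcases eq_or_ne (coeff β p) 0 with h0 | h0
  · simp [h0]
  · rw [dpow_monomial, coeff_smul, coeff_smul, tsub_self, coeff_monomial, if_pos rfl]
    simp only [Nat.descFactorial_self, smul_eq_mul, mul_one]

lemma deg_add (u v : Fin d →₀ ℕ) : (u + v).degree = u.degree + v.degree := by
  rw [deg_univ, deg_univ, deg_univ, ← Finset.sum_add_distrib]
  exact Finset.sum_congr rfl (fun j _ => Finsupp.add_apply u v j)

lemma exists_low_coeff {q L : MvPolynomial (Fin d) ℂ} {l : ℕ} (hq : q ≠ 0)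
    (h1 : ∀ k < l, homogeneousComponent k L = 0) (h2 : homogeneousComponent l L ≠ 0) :
    ∃ β : Fin d →₀ ℕ, coeff β (q * L) ≠ 0 ∧ Finsupp.degree β ≤ q.totalDegree + l := by
  classical
  obtain ⟨β₀, hβ₀⟩ := support_nonempty.mpr hq
  set A := q.support.image Finsupp.degree with hA
  have hAne : A.Nonempty := ⟨_, Finset.mem_image_of_mem _ hβ₀⟩
  set a := A.min' hAne with ha
  have hmin : ∀ u : Fin d →₀ ℕ, coeff u q ≠ 0 → a ≤ u.degree := by
    intro u hu
    exact A.min'_le _ (Finset.mem_image_of_mem _ (mem_support_iff.mpr hu))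
  obtain ⟨β₁, hβ₁mem, hβ₁deg⟩ := Finset.mem_image.mp (A.min'_mem hAne)
  have haq : a ≤ q.totalDegree := by
    rw [ha, ← hβ₁deg]
    exact le_totalDegree hβ₁mem
  have hqa : homogeneousComponent a q ≠ 0 := by
    intro h
    have := coeff_homogeneousComponent a q β₁
    rw [if_pos hβ₁deg, h, coeff_zero] at this
    exact mem_support_iff.mp hβ₁mem this.symm
  have hprod : homogeneousComponent a q * homogeneousComponent l L ≠ 0 :=
    mul_ne_zero hqa h2
  obtain ⟨β, hβ⟩ := support_nonempty.mpr hprod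
  have hco : coeff β (homogeneousComponent a q * homogeneousComponent l L) ≠ 0 :=
    mem_support_iff.mp hβ
  have hhom : (homogeneousComponent a q * homogeneousComponent l L).IsHomogeneous (a + l) :=
    (homogeneousComponent_isHomogeneous a q).mul (homogeneousComponent_isHomogeneous l L)
  have hβdeg : β.degree = a + l := by
    have := hhom hco
    exact (by rw [Finsupp.degree_eq_weight_one]; rfl : β.degree = Finsupp.weight 1 β).trans this
  refine ⟨β, ?_, ?_⟩
  · have : coeff β (q * L) = coeff β (homogeneousComponent a q * homogeneousComponent l L) := by
      rw [coeff_mul, coeff_mul]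
      apply Finset.sum_congr rfl
      intro uv huv
      have hsum : uv.1 + uv.2 = β := Finset.HasAntidiagonal.mem_antidiagonal.mp huv
      have hdegsum : uv.1.degree + uv.2.degree = a + l := by
        rw [← deg_add, hsum, hβdeg]
      rw [coeff_homogeneousComponent, coeff_homogeneousComponent]
      rcases lt_trichotomy uv.1.degree a with hlt | heq | hgt
      · have hq0 : coeff uv.1 q = 0 := by
          by_contra hc
          exact absurd (hmin _ hc) (Nat.not_le.mpr hlt)
        rw [hq0, if_neg (Nat.ne_of_lt hlt), zero_mul, zero_mul]
      · have hv : uv.2.degree = l := by omega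
        rw [if_pos heq, if_pos hv]
      · have hv : uv.2.degree < l := by omega
        have hL0 : coeff uv.2 L = 0 := by
          have := coeff_homogeneousComponent uv.2.degree L uv.2
          rw [if_pos rfl, h1 _ hv, coeff_zero] at this
          exact this.symm
        rw [hL0, if_neg (Nat.ne_of_lt hv), mul_zero, mul_zero]
    rw [this]
    exact hco
  · rw [hβdeg]
    exact Nat.add_le_add_right haq l

noncomputable def pairQ : MvPolynomial (Fin d) ℂ →ₗ[ℂ]
    MvPolynomial (Fin d) ℂ →ₗ[ℂ] ℂ :=
  (LinearMap.llcomp ℂ (MvPolynomial (Fin d) ℂ) (MvPolynomial (Fin d) ℂ) ℂ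
    (lcoeff ℂ 0)).comp (Phi (d := d)).toLinearMap

lemma pairQ_apply (q g : MvPolynomial (Fin d) ℂ) : pairQ q g = coeff 0 (Phi q g) := rfl

lemma pairQ_mul (q L f : MvPolynomial (Fin d) ℂ) :
    pairQ q (diffOp L f) = pairQ (q * L) f := by
  rw [pairQ_apply, pairQ_apply, diffOp_eq, map_mul, Module.End.mul_apply]

theorem matsuura_surjectivity_aux {d : ℕ} (L : MvPolynomial (Fin d) ℂ) (l : ℕ) (hL0 : L ≠ 0)
    (hL : lowestDegree L l) :
    (∀ n : ℕ, l ≤ n →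
        Submodule.map (diffOp L) (restrictTotalDegree (Fin d) ℂ n) =
          restrictTotalDegree (Fin d) ℂ (n - l)) ∧
    (∀ n : ℕ, n < l →
        Submodule.map (diffOp L) (restrictTotalDegree (Fin d) ℂ n) = ⊥) := by
  obtain ⟨h1, h2⟩ := hL
  constructor
  · intro n hn
    set V := restrictTotalDegree (Fin d) ℂ n with hV
    set W := restrictTotalDegree (Fin d) ℂ (n - l) with hW
    have hmaps : ∀ x ∈ V, diffOp L x ∈ W := by
      intro x hx
      rw [hW, mem_restrictTotalDegree]
      exact diffOp_totalDegree_le h1 ((mem_restrictTotalDegree _ _ _).mp hx)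
    set T : V →ₗ[ℂ] W := (diffOp L).restrict hmaps with hT
    -- the pairing map into the dual
    set R : W →ₗ[ℂ] Module.Dual ℂ W := pairQ.domRestrict₁₂ W W with hRdef
    have hR : ∀ (q g : W), R q g
        = coeff 0 (Phi (q : MvPolynomial (Fin d) ℂ) (g : MvPolynomial (Fin d) ℂ)) :=
      fun q g => rfl
    have hRinj : Function.Injective R := by
      rw [← LinearMap.ker_eq_bot, Submodule.eq_bot_iff]
      intro q hq
      have hq' : ∀ α : Fin d →₀ ℕ, coeff α (q : MvPolynomial (Fin d) ℂ) = 0 := by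
        intro α
        by_contra hc
        have hαdeg : α.degree ≤ n - l :=
          (le_totalDegree (mem_support_iff.mpr hc)).trans
            ((mem_restrictTotalDegree _ _ _).mp q.2)
        have hmem : (monomial α 1 : MvPolynomial (Fin d) ℂ) ∈ W := by
          rw [hW, mem_restrictTotalDegree]
          exact (totalDegree_monomial_le α 1).trans hαdeg
        have := congrArg (fun φ : Module.Dual ℂ W => φ ⟨monomial α 1, hmem⟩) hq
        simp only [LinearMap.zero_apply] at this
        rw [hR] at this
        rw [pairing_monomial] at this
        have hfac : (∏ j, ((α j).factorial : ℂ)) ≠ 0 :=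
          Finset.prod_ne_zero_iff.mpr
            (fun j _ => Nat.cast_ne_zero.mpr (Nat.factorial_ne_zero _))
        exact hc (by
          rcases mul_eq_zero.mp this with h | h
          · exact h
          · exact absurd h hfac)
      exact Subtype.ext (MvPolynomial.ext _ _ (fun α => by simp [hq' α]))
    have hRsurj : Function.Surjective R :=
      (LinearMap.injective_iff_surjective_of_finrank_eq_finrank
        (Subspace.dual_finrank_eq (V := ↥W)).symm).mp hRinj
    have hTsurj : Function.Surjective T := by
      rw [← LinearMap.dualMap_injective_iff, ← LinearMap.ker_eq_bot, Submodule.eq_bot_iff]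
      intro φ hφ
      obtain ⟨q, rfl⟩ := hRsurj φ
      rcases eq_or_ne q 0 with rfl | hq0
      · rw [map_zero]
      · exfalso
        have hqne : (q : MvPolynomial (Fin d) ℂ) ≠ 0 := by
          simpa [Submodule.coe_eq_zero] using hq0
        obtain ⟨β, hβne, hβdeg⟩ := exists_low_coeff hqne h1 h2
        have hβn : β.degree ≤ n := by
          have : (q : MvPolynomial (Fin d) ℂ).totalDegree ≤ n - l :=
            (mem_restrictTotalDegree _ _ _).mp q.2
          omega
        have hxV : (monomial β 1 : MvPolynomial (Fin d) ℂ) ∈ V := by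
          rw [hV, mem_restrictTotalDegree]
          exact (totalDegree_monomial_le β 1).trans hβn
        have heval := congrArg (fun ψ : Module.Dual ℂ V => ψ ⟨monomial β 1, hxV⟩) hφ
        simp only [LinearMap.zero_apply] at heval
        rw [LinearMap.dualMap_apply] at heval
        have hTx : ((T ⟨monomial β 1, hxV⟩ : W) : MvPolynomial (Fin d) ℂ)
            = diffOp L (monomial β 1) := by
          rw [hT, LinearMap.restrict_apply]
        rw [hR] at heval
        rw [hTx] at heval
        rw [← pairQ_apply, pairQ_mul, pairQ_apply, pairing_monomial] at heval
        have hfac : (∏ j, ((β j).factorial : ℂ)) ≠ 0 :=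
          Finset.prod_ne_zero_iff.mpr
            (fun j _ => Nat.cast_ne_zero.mpr (Nat.factorial_ne_zero _))
        exact mul_ne_zero hβne hfac heval
    apply le_antisymm
    · rintro g ⟨f, hf, rfl⟩
      exact hmaps f hf
    · intro g hg
      obtain ⟨f, hf⟩ := hTsurj ⟨g, hg⟩
      refine ⟨f.1, f.2, ?_⟩
      have := congrArg (Subtype.val) hf
      rwa [hT, LinearMap.restrict_apply] at this
  · intro n hn
    rw [Submodule.eq_bot_iff]
    rintro g ⟨f, hf, rfl⟩
    exact diffOp_eq_zero h1 ((mem_restrictTotalDegree _ _ _).mp hf) hn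

/-- Matsuura's theorem: `L(D)` maps polynomials of degree at most `n` onto polynomials of
degree at most `n - l` (and onto the zero space when `n < l`). -/
theorem matsuura_surjectivity {d : ℕ} (L : MvPolynomial (Fin d) ℂ) (l : ℕ) (hL0 : L ≠ 0)
    (hL : lowestDegree L l) :
    (∀ n : ℕ, l ≤ n →
        Submodule.map (diffOp L) (restrictTotalDegree (Fin d) ℂ n) =
          restrictTotalDegree (Fin d) ℂ (n - l)) ∧
    (∀ n : ℕ, n < l →
        Submodule.map (diffOp L) (restrictTotalDegree (Fin d) ℂ n) = ⊥) :=
  matsuura_surjectivity_aux L l hL0 hL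
end

section
/- Let q ∈ ℂ[x₁,…,x_d] have degree l with ⟨q⟩ a radical ideal, and let L have lowest-degree nonvanishing monomial of degree l with ker L(D) ∩ ⟨q⟩ = {0}. Then for every polynomial p there exists a unique polynomial f ∈ ker L(D) such that f = p on the variety V(⟨q⟩); moreover deg f equals the minimal degree of any polynomial interpolating p on V(⟨q⟩). -/
open MvPolynomial

namespace PDEInterp

variable {d : ℕ}

/-- Abbreviation for `pderiv j` as an endomorphism. -/
noncomputable abbrev PD (j : Fin d) : Module.End ℂ (MvPolynomial (Fin d) ℂ) :=
  (pderiv j).toLinearMap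

lemma pderiv_zero_of_deg_zero (j : Fin d) {p : MvPolynomial (Fin d) ℂ}
    (h : p.totalDegree = 0) : pderiv j p = 0 := by
  conv_lhs => rw [p.as_sum]
  rw [map_sum]
  refine Finset.sum_eq_zero fun s hs => ?_
  rw [pderiv_monomial, (totalDegree_eq_zero_iff (Fin d) p).1 h s hs j, Nat.cast_zero,
    mul_zero, map_zero]

lemma totalDegree_pderiv_le (j : Fin d) (p : MvPolynomial (Fin d) ℂ) (n : ℕ)
    (h : p.totalDegree ≤ n + 1) : (pderiv j p).totalDegree ≤ n := by
  conv_lhs => rw [p.as_sum]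
  rw [map_sum]
  refine (totalDegree_finset_sum _ _).trans (Finset.sup_le fun s hs => ?_)
  rw [pderiv_monomial]
  by_cases hsj : s j = 0
  · simp [hsj]
  · refine (totalDegree_monomial_le _ _).trans ?_
    have hle : Finsupp.single j 1 ≤ s := Finsupp.single_le_iff.2 (Nat.one_le_iff_ne_zero.2 hsj)
    have hsum : ((s - Finsupp.single j 1).sum fun _ e => e) + 1 = s.sum fun _ e => e := by
      conv_rhs => rw [← tsub_add_cancel_of_le hle]
      rw [Finsupp.sum_add_index' (fun _ => rfl) (fun _ _ _ => rfl),
        Finsupp.sum_single_index rfl]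
    have h2 : (s.sum fun _ e => e) ≤ n + 1 := (le_totalDegree hs).trans h
    show ((s - Finsupp.single j 1).sum fun _ e => e) ≤ n
    omega

lemma pow_bound (j : Fin d) (k : ℕ) :
    ∀ (p : MvPolynomial (Fin d) ℂ) (n : ℕ), p.totalDegree ≤ n →
      ((PD j ^ k) p).totalDegree ≤ n - k ∧ (n < k → (PD j ^ k) p = 0) := by
  induction k with
  | zero =>
    intro p n h
    refine ⟨?_, by omega⟩
    simpa using h
  | succ k ih =>
    intro p n h
    have happ : (PD j ^ (k + 1)) p = (PD j ^ k) (pderiv j p) := by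
      rw [pow_succ, Module.End.mul_apply]
      rfl
    by_cases hn : n = 0
    · subst hn
      have hp0 : pderiv j p = 0 := pderiv_zero_of_deg_zero j (Nat.le_zero.1 h)
      rw [happ, hp0, map_zero]
      simp
    · have h1 : (pderiv j p).totalDegree ≤ n - 1 :=
        totalDegree_pderiv_le j p (n - 1) (by omega)
      obtain ⟨ha, hb⟩ := ih (pderiv j p) (n - 1) h1
      rw [happ]
      exact ⟨ha.trans_eq (by omega), fun hlt => hb (by omega)⟩

lemma prodOp_bound (α : Fin d →₀ ℕ) :
    ∀ (ls : List (Fin d)) (p : MvPolynomial (Fin d) ℂ) (n : ℕ), p.totalDegree ≤ n →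
      (((ls.map fun j => PD j ^ α j).prod) p).totalDegree ≤ n - (ls.map fun j => α j).sum ∧
      (n < (ls.map fun j => α j).sum → ((ls.map fun j => PD j ^ α j).prod) p = 0) := by
  intro ls
  induction ls with
  | nil =>
    intro p n h
    simp only [List.map_nil, List.prod_nil, List.sum_nil, Module.End.one_apply, Nat.sub_zero]
    exact ⟨h, by omega⟩
  | cons j t ih =>
    intro p n h
    simp only [List.map_cons, List.prod_cons, List.sum_cons, Module.End.mul_apply]
    obtain ⟨ha, hb⟩ := ih p n h
    obtain ⟨hc, hd⟩ := pow_bound j (α j)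
      (((t.map fun j => PD j ^ α j).prod) p) (n - (t.map fun j => α j).sum) ha
    refine ⟨hc.trans_eq (by omega), fun hlt => ?_⟩
    by_cases hS : n < (t.map fun j => α j).sum
    · rw [hb hS, map_zero]
    · exact hd (by omega)

lemma diffOp_apply (L : MvPolynomial (Fin d) ℂ) (p : MvPolynomial (Fin d) ℂ) :
    diffOp L p =
      ∑ α ∈ L.support, L.coeff α • (((List.finRange d).map fun j => PD j ^ α j).prod p) := by
  rw [diffOp, LinearMap.sum_apply]
  simp only [LinearMap.smul_apply]

lemma support_le {l : ℕ} {L : MvPolynomial (Fin d) ℂ} (hL : lowestDegree L l)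
    {α : Fin d →₀ ℕ} (hα : α ∈ L.support) :
    l ≤ ((List.finRange d).map fun j => α j).sum := by
  rw [← Fin.sum_univ_def]
  have hdeg : α.degree = ∑ j, α j :=
    Finset.sum_subset (Finset.subset_univ _) (fun i _ hi => Finsupp.notMem_support_iff.1 hi)
  rw [← hdeg]
  by_contra hlt
  push_neg at hlt
  have h0 := hL.1 α.degree hlt
  have hc : coeff α (homogeneousComponent α.degree L) = coeff α L := by
    rw [coeff_homogeneousComponent, if_pos rfl]
  rw [h0, coeff_zero] at hc
  exact (mem_support_iff.1 hα) hc.symm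

lemma diffOp_deg {l : ℕ} {L : MvPolynomial (Fin d) ℂ} (hL : lowestDegree L l)
    (p : MvPolynomial (Fin d) ℂ) {n : ℕ} (h : p.totalDegree ≤ n) :
    (diffOp L p).totalDegree ≤ n - l := by
  rw [diffOp_apply]
  refine (totalDegree_finset_sum _ _).trans (Finset.sup_le fun α hα => ?_)
  refine (totalDegree_smul_le _ _).trans ?_
  exact ((prodOp_bound α (List.finRange d) p n h).1).trans
    (Nat.sub_le_sub_left (support_le hL hα) n)

lemma diffOp_zero_of_deg_lt {l : ℕ} {L : MvPolynomial (Fin d) ℂ} (hL : lowestDegree L l)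
    {p : MvPolynomial (Fin d) ℂ} (h : p.totalDegree < l) : diffOp L p = 0 := by
  rw [diffOp_apply]
  refine Finset.sum_eq_zero fun α hα => ?_
  rw [(prodOp_bound α (List.finRange d) p p.totalDegree le_rfl).2
    (lt_of_lt_of_le h (support_le hL hα)), smul_zero]

lemma exists_decomp {l : ℕ} (q : MvPolynomial (Fin d) ℂ) (hq0 : q ≠ 0)
    (hqdeg : q.totalDegree = l) (L : MvPolynomial (Fin d) ℂ) (hL : lowestDegree L l)
    (hker : ∀ g : MvPolynomial (Fin d) ℂ, diffOp L g = 0 → g ∈ Ideal.span {q} → g = 0)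
    (p : MvPolynomial (Fin d) ℂ) :
    ∃ f, diffOp L f = 0 ∧ f.totalDegree ≤ p.totalDegree ∧ p - f ∈ Ideal.span {q} := by
  by_cases hcase : p.totalDegree < l
  · exact ⟨p, diffOp_zero_of_deg_lt hL hcase, le_rfl, by simp⟩
  push_neg at hcase
  set n := p.totalDegree with hn
  have hmapφ : ∀ x ∈ restrictTotalDegree (Fin d) ℂ n, diffOp L x ∈
      restrictTotalDegree (Fin d) ℂ (n - l) := fun x hx =>
    (mem_restrictTotalDegree _ _ _).2 (diffOp_deg hL x ((mem_restrictTotalDegree _ _ _).1 hx))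
  have hmapψ : ∀ x ∈ restrictTotalDegree (Fin d) ℂ (n - l),
      LinearMap.mulLeft ℂ q x ∈ restrictTotalDegree (Fin d) ℂ n := by
    intro x hx
    rw [mem_restrictTotalDegree]
    have h1 := (mem_restrictTotalDegree _ _ x).1 hx
    refine le_trans (totalDegree_mul q x) ?_
    rw [hqdeg]
    omega
  set φ := (diffOp L).restrict hmapφ with hφdef
  set ψ := (LinearMap.mulLeft ℂ q).restrict hmapψ with hψdef
  have hφker : ∀ v : restrictTotalDegree (Fin d) ℂ n, φ v = 0 →
      diffOp L (v : MvPolynomial (Fin d) ℂ) = 0 := by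
    intro v hv
    have h1 := congrArg Subtype.val hv
    rwa [hφdef, LinearMap.restrict_apply] at h1
  have hψval : ∀ w : restrictTotalDegree (Fin d) ℂ (n - l),
      ((ψ w : restrictTotalDegree (Fin d) ℂ n) : MvPolynomial (Fin d) ℂ) =
        q * (w : MvPolynomial (Fin d) ℂ) := by
    intro w
    rw [hψdef, LinearMap.restrict_apply]
    rfl
  have hdisj : LinearMap.ker φ ⊓ LinearMap.range ψ = ⊥ := by
    rw [eq_bot_iff]
    rintro v ⟨hv1, hv2⟩
    obtain ⟨w, hw⟩ := hv2
    have hval : (v : MvPolynomial (Fin d) ℂ) = q * (w : MvPolynomial (Fin d) ℂ) := by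
      rw [← hw]; exact hψval w
    have hv0 : (v : MvPolynomial (Fin d) ℂ) = 0 :=
      hker _ (hφker v (LinearMap.mem_ker.1 hv1))
        (hval ▸ Ideal.mem_span_singleton.2 ⟨_, rfl⟩)
    exact (Submodule.mem_bot ℂ).2 (Subtype.ext hv0)
  have hψinj : Function.Injective ψ := by
    rw [← LinearMap.ker_eq_bot, eq_bot_iff]
    intro w hw
    have h1 : ψ w = 0 := LinearMap.mem_ker.1 hw
    have h2 : q * (w : MvPolynomial (Fin d) ℂ) = 0 := by
      rw [← hψval w, h1]; rfl
    rcases mul_eq_zero.1 h2 with h | h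
    · exact absurd h hq0
    · exact (Submodule.mem_bot ℂ).2 (Subtype.ext h)
  have hrank : Module.finrank ℂ (restrictTotalDegree (Fin d) ℂ n) ≤
      Module.finrank ℂ (LinearMap.ker φ) +
        Module.finrank ℂ (restrictTotalDegree (Fin d) ℂ (n - l)) := by
    have h1 := LinearMap.finrank_range_add_finrank_ker φ
    have h2 : Module.finrank ℂ (LinearMap.range φ) ≤
        Module.finrank ℂ (restrictTotalDegree (Fin d) ℂ (n - l)) := Submodule.finrank_le _
    omega
  have hr2 : Module.finrank ℂ (LinearMap.range ψ) =
      Module.finrank ℂ (restrictTotalDegree (Fin d) ℂ (n - l)) :=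
    LinearMap.finrank_range_of_inj hψinj
  have hsup : LinearMap.ker φ ⊔ LinearMap.range ψ = ⊤ := by
    apply Submodule.eq_top_of_finrank_eq
    have h3 := Submodule.finrank_sup_add_finrank_inf_eq (LinearMap.ker φ) (LinearMap.range ψ)
    rw [hdisj, finrank_bot] at h3
    have h4 : Module.finrank ℂ ↥(LinearMap.ker φ ⊔ LinearMap.range ψ) ≤
        Module.finrank ℂ (restrictTotalDegree (Fin d) ℂ n) := Submodule.finrank_le _
    omega
  have hpV : p ∈ restrictTotalDegree (Fin d) ℂ n := (mem_restrictTotalDegree _ _ p).2 le_rfl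
  have hmem : (⟨p, hpV⟩ : restrictTotalDegree (Fin d) ℂ n) ∈
      LinearMap.ker φ ⊔ LinearMap.range ψ := hsup ▸ Submodule.mem_top
  obtain ⟨y, hy, z, hz, hyz⟩ := Submodule.mem_sup.1 hmem
  obtain ⟨w, hw⟩ := hz
  refine ⟨(y : MvPolynomial (Fin d) ℂ), hφker y (LinearMap.mem_ker.1 hy),
    (mem_restrictTotalDegree _ _ _).1 y.2, ?_⟩
  have hsum : (y : MvPolynomial (Fin d) ℂ) + (z : MvPolynomial (Fin d) ℂ) = p :=
    congrArg Subtype.val hyz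
  have hzval : (z : MvPolynomial (Fin d) ℂ) = q * (w : MvPolynomial (Fin d) ℂ) := by
    rw [← hw]; exact hψval w
  have hpf : p - (y : MvPolynomial (Fin d) ℂ) = q * (w : MvPolynomial (Fin d) ℂ) := by
    rw [← hsum, hzval]; ring
  rw [hpf]
  exact Ideal.mem_span_singleton.2 ⟨_, rfl⟩

end PDEInterp

theorem unique_minimal_degree_pde_interpolant {d l : ℕ} (q : MvPolynomial (Fin d) ℂ)
    (hq0 : q ≠ 0) (hqdeg : q.totalDegree = l) (hrad : (Ideal.span {q}).IsRadical)
    (L : MvPolynomial (Fin d) ℂ) (hL : lowestDegree L l)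
    (hker : ∀ g : MvPolynomial (Fin d) ℂ, diffOp L g = 0 → g ∈ Ideal.span {q} → g = 0)
    (p : MvPolynomial (Fin d) ℂ) :
    ∃ f : MvPolynomial (Fin d) ℂ,
      (diffOp L f = 0 ∧ ∀ x ∈ zeroLocus ℂ (Ideal.span {q}), eval x f = eval x p) ∧
      (∀ g : MvPolynomial (Fin d) ℂ,
        (∀ x ∈ zeroLocus ℂ (Ideal.span {q}), eval x g = eval x p) →
        f.totalDegree ≤ g.totalDegree) ∧
      (∀ f' : MvPolynomial (Fin d) ℂ, diffOp L f' = 0 →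
        (∀ x ∈ zeroLocus ℂ (Ideal.span {q}), eval x f' = eval x p) → f' = f) := by
  set I := Ideal.span ({q} : Set (MvPolynomial (Fin d) ℂ)) with hI
  -- Nullstellensatz: vanishing on the zero locus means membership in I
  have hNull : ∀ g : MvPolynomial (Fin d) ℂ,
      (∀ x ∈ zeroLocus ℂ I, eval x g = 0) → g ∈ I := by
    intro g hg
    have h1 : g ∈ vanishingIdeal ℂ (zeroLocus ℂ I) := mem_vanishingIdeal_iff.2 hg
    rwa [vanishingIdeal_zeroLocus_eq_radical, hrad.radical] at h1
  have hVan : ∀ g : MvPolynomial (Fin d) ℂ, g ∈ I → ∀ x ∈ zeroLocus ℂ I, eval x g = 0 := by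
    intro g hg x hx
    exact mem_zeroLocus_iff.1 hx g hg
  -- the interpolant
  obtain ⟨f, hf0, hfdeg, hfp⟩ := PDEInterp.exists_decomp q hq0 hqdeg L hL hker p
  have hfeval : ∀ x ∈ zeroLocus ℂ I, eval x f = eval x p := by
    intro x hx
    have h1 := hVan _ hfp x hx
    rw [map_sub] at h1
    exact (sub_eq_zero.1 h1).symm
  have huniq : ∀ f' : MvPolynomial (Fin d) ℂ, diffOp L f' = 0 →
      (∀ x ∈ zeroLocus ℂ I, eval x f' = eval x p) → f' = f := by
    intro f' hf'0 hf'p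
    have hmem : f' - f ∈ I := hNull _ (fun x hx => by
      rw [map_sub, hf'p x hx, hfeval x hx, sub_self])
    have h0 : diffOp L (f' - f) = 0 := by rw [map_sub, hf'0, hf0, sub_zero]
    exact sub_eq_zero.1 (hker _ h0 hmem)
  refine ⟨f, ⟨hf0, hfeval⟩, ?_, huniq⟩
  intro g hg
  obtain ⟨fg, hfg0, hfgdeg, hfgp⟩ := PDEInterp.exists_decomp q hq0 hqdeg L hL hker g
  have hfgeval : ∀ x ∈ zeroLocus ℂ I, eval x fg = eval x p := by
    intro x hx
    have h1 := hVan _ hfgp x hx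
    rw [map_sub] at h1
    rw [(sub_eq_zero.1 h1).symm, hg x hx]
  have hfgf : fg = f := huniq fg hfg0 hfgeval
  rw [← hfgf]
  exact hfgdeg
end

section
/- Let q ∈ ℂ[x₁,…,x_d] be a polynomial of degree l, J = ⟨q⟩, and L = q^∧ its leading form (the degree-l homogeneous part). Then ker L̄(D) ∩ J = {0}, and consequently ℂ[x₁,…,x_d] = ker L̄(D) ⊕ J. -/
open MvPolynomial

/-- The polynomial with complex-conjugated coefficients. -/
noncomputable def conjPoly {d : ℕ} (L : MvPolynomial (Fin d) ℂ) : MvPolynomial (Fin d) ℂ :=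
  MvPolynomial.map (starRingEnd ℂ) L

/-- The Fischer (apolar) pairing `⟨f, L⟩ = L̄(D) f`. -/
noncomputable def fischer {d : ℕ} (f L : MvPolynomial (Fin d) ℂ) : MvPolynomial (Fin d) ℂ :=
  diffOp (conjPoly L) f

namespace FischerProof

variable {d : ℕ}

/-- partial derivative as a linear endomorphism -/
noncomputable def P (j : Fin d) : Module.End ℂ (MvPolynomial (Fin d) ℂ) :=
  (pderiv j).toLinearMap

/-- the operator `D^α` -/
noncomputable def Dop (α : Fin d →₀ ℕ) : Module.End ℂ (MvPolynomial (Fin d) ℂ) :=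
  ((List.finRange d).map (fun j => P j ^ (α j))).prod

lemma diffOp_eq (L : MvPolynomial (Fin d) ℂ) :
    diffOp L = ∑ α ∈ L.support, L.coeff α • Dop α := rfl

@[simp] lemma P_apply (j : Fin d) (f : MvPolynomial (Fin d) ℂ) : P j f = pderiv j f := rfl

lemma pow_pderiv_monomial (j : Fin d) (k : ℕ) (β : Fin d →₀ ℕ) (c : ℂ) :
    (P j ^ k) (monomial β c) =
      monomial (β - Finsupp.single j k) (((β j).descFactorial k : ℂ) * c) := by
  induction k with
  | zero => simp
  | succ k ih =>
    rw [pow_succ', Module.End.mul_apply, ih, P_apply, pderiv_monomial]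
    rw [tsub_tsub, ← Finsupp.single_add]
    congr 1
    rw [Finsupp.tsub_apply, Finsupp.single_eq_same, Nat.descFactorial_succ, Nat.cast_mul]
    ring


lemma commute_P (i j : Fin d) : Commute (P i) (P j) := by
  apply MvPolynomial.linearMap_ext
  intro s
  ext c
  simp only [LinearMap.coe_comp, Function.comp_apply, Module.End.mul_apply, P_apply,
    pderiv_monomial]
  rcases eq_or_ne i j with rfl | hij
  · rfl
  · rw [Finsupp.tsub_apply, Finsupp.tsub_apply,
      Finsupp.single_eq_of_ne' hij, Finsupp.single_eq_of_ne' (Ne.symm hij)]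
    rw [tsub_tsub, tsub_tsub, add_comm]
    simp [mul_comm]

lemma commute_Ppow (i j : Fin d) (a b : ℕ) : Commute (P i ^ a) (P j ^ b) :=
  (commute_P i j).pow_pow a b

lemma list_prod_pow_add (l : List (Fin d)) (α β : Fin d →₀ ℕ) :
    (l.map fun j => P j ^ ((α + β) j)).prod =
      (l.map fun j => P j ^ (α j)).prod * (l.map fun j => P j ^ (β j)).prod := by
  induction l with
  | nil => simp
  | cons a t ih =>
    have hc : Commute (P a ^ (β a)) ((t.map fun j => P j ^ (α j)).prod) :=
      Commute.list_prod_right _ _ (by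
        intro x hx
        obtain ⟨j, _, rfl⟩ := List.mem_map.mp hx
        exact commute_Ppow a j _ _)
    simp only [List.map_cons, List.prod_cons, ih]
    rw [show (α + β) a = α a + β a from rfl, pow_add]
    exact hc.mul_mul_mul_comm _ _

lemma Dop_add (α β : Fin d →₀ ℕ) : Dop (α + β) = Dop α * Dop β :=
  list_prod_pow_add _ α β

lemma sum_single_apply_of_not_mem (l : List (Fin d)) (α : Fin d →₀ ℕ) {a : Fin d}
    (ha : a ∉ l) : ((l.map fun j => Finsupp.single j (α j)).sum) a = 0 := by
  induction l with
  | nil => simp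
  | cons b t ih =>
    simp only [List.mem_cons, not_or] at ha
    simp [Finsupp.add_apply, Finsupp.single_eq_of_ne' (Ne.symm ha.1), ih ha.2]

lemma list_prod_monomial (l : List (Fin d)) (hl : l.Nodup) (α β : Fin d →₀ ℕ) (c : ℂ) :
    ((l.map fun j => P j ^ (α j)).prod) (monomial β c) =
      monomial (β - (l.map fun j => Finsupp.single j (α j)).sum)
        ((l.map fun j => ((β j).descFactorial (α j) : ℂ)).prod * c) := by
  induction l with
  | nil => simp
  | cons a t ih =>
    have hnd := List.nodup_cons.mp hl
    simp only [List.map_cons, List.prod_cons, Module.End.mul_apply, ih hnd.2,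
      pow_pderiv_monomial, List.sum_cons]
    rw [tsub_tsub, Finsupp.tsub_apply, sum_single_apply_of_not_mem t α hnd.1, tsub_zero,
      add_comm ((List.map (fun j => Finsupp.single j (α j)) t).sum)]
    congr 1
    ring

lemma Dop_monomial (α β : Fin d →₀ ℕ) (c : ℂ) :
    Dop α (monomial β c) =
      monomial (β - α) ((∏ j, ((β j).descFactorial (α j) : ℂ)) * c) := by
  rw [Dop, list_prod_monomial _ (List.nodup_finRange d)]
  have h1 : ((List.finRange d).map fun j => Finsupp.single j (α j)).sum = α := by
    rw [← Fin.sum_univ_def, Finsupp.univ_sum_single]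
  have h2 : ((List.finRange d).map fun j => ((β j).descFactorial (α j) : ℂ)).prod
      = ∏ j, ((β j).descFactorial (α j) : ℂ) := (Fin.prod_univ_def _).symm
  rw [h1, h2]


lemma diffOp_eq_superset (L : MvPolynomial (Fin d) ℂ) {s : Finset (Fin d →₀ ℕ)}
    (hs : L.support ⊆ s) : diffOp L = ∑ α ∈ s, L.coeff α • Dop α := by
  rw [diffOp_eq]
  exact Finset.sum_subset hs fun x _ hx => by
    rw [MvPolynomial.notMem_support_iff.mp hx, zero_smul]

lemma diffOp_add (A B : MvPolynomial (Fin d) ℂ) : diffOp (A + B) = diffOp A + diffOp B := by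
  classical
  rw [diffOp_eq_superset A (s := A.support ∪ B.support) Finset.subset_union_left,
    diffOp_eq_superset B (s := A.support ∪ B.support) Finset.subset_union_right,
    diffOp_eq_superset (A + B) (s := A.support ∪ B.support) MvPolynomial.support_add,
    ← Finset.sum_add_distrib]
  exact Finset.sum_congr rfl fun α _ => by rw [coeff_add, add_smul]

lemma diffOp_monomial (α : Fin d →₀ ℕ) (c : ℂ) : diffOp (monomial α c) = c • Dop α := by
  classical
  rcases eq_or_ne c 0 with rfl | hc
  · rw [diffOp_eq]
    simp [support_monomial]
  · rw [diffOp_eq]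
    simp [support_monomial, hc, coeff_monomial]

lemma diffOp_mul (A B : MvPolynomial (Fin d) ℂ) : diffOp (A * B) = diffOp A * diffOp B := by
  induction A using MvPolynomial.induction_on' with
  | monomial α a =>
    induction B using MvPolynomial.induction_on' with
    | monomial β b =>
      rw [monomial_mul, diffOp_monomial, diffOp_monomial, diffOp_monomial, Dop_add,
        smul_mul_smul_comm]
    | add B C hB hC => rw [mul_add, diffOp_add, diffOp_add, mul_add, hB, hC]
  | add A A' hA hA' => rw [add_mul, diffOp_add, diffOp_add, add_mul, hA, hA']

lemma diffOp_apply_monomial (L : MvPolynomial (Fin d) ℂ) (β : Fin d →₀ ℕ) (c : ℂ) :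
    diffOp L (monomial β c) =
      ∑ α ∈ L.support, monomial (β - α)
        (L.coeff α * ((∏ j, ((β j).descFactorial (α j) : ℂ)) * c)) := by
  rw [diffOp_eq, LinearMap.sum_apply]
  exact Finset.sum_congr rfl fun α _ => by
    rw [LinearMap.smul_apply, Dop_monomial, smul_monomial, smul_eq_mul]

lemma diffOp_apply_expand (L f : MvPolynomial (Fin d) ℂ) :
    diffOp L f = ∑ β ∈ f.support, diffOp L (monomial β (f.coeff β)) := by
  conv_lhs => rw [f.as_sum]
  rw [map_sum]

lemma degree_tsub_add {α β : Fin d →₀ ℕ} (h : α ≤ β) :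
    (β - α).degree + α.degree = β.degree := by
  simp only [Finsupp.degree_eq_weight_one]
  rw [← map_add, tsub_add_cancel_of_le h]

lemma isHom_degree {p : MvPolynomial (Fin d) ℂ} {n : ℕ} (hp : p.IsHomogeneous n)
    {β : Fin d →₀ ℕ} (hβ : p.coeff β ≠ 0) : β.degree = n := by
  rw [Finsupp.degree_eq_weight_one]
  exact hp hβ

lemma prod_descFactorial_eq_zero {α β : Fin d →₀ ℕ} (h : ¬ α ≤ β) :
    (∏ j, ((β j).descFactorial (α j) : ℂ)) = 0 := by
  obtain ⟨j0, hj0⟩ : ∃ j, β j < α j := by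
    by_contra hcon
    push_neg at hcon
    exact h fun i => hcon i
  exact Finset.prod_eq_zero (Finset.mem_univ j0)
    (by rw [Nat.descFactorial_eq_zero_iff_lt.mpr hj0, Nat.cast_zero])

lemma isHomogeneous_diffOp {L f : MvPolynomial (Fin d) ℂ} {l n : ℕ}
    (hL : L.IsHomogeneous l) (hf : f.IsHomogeneous n) :
    (diffOp L f).IsHomogeneous (n - l) := by
  rw [diffOp_apply_expand]
  refine IsHomogeneous.sum _ _ _ fun β hβ => ?_
  rw [diffOp_apply_monomial]
  refine IsHomogeneous.sum _ _ _ fun α hα => ?_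
  by_cases hle : α ≤ β
  · refine isHomogeneous_monomial _ ?_
    have h1 : α.degree = l := isHom_degree hL (mem_support_iff.mp hα)
    have h2 : β.degree = n := isHom_degree hf (mem_support_iff.mp hβ)
    have h3 := degree_tsub_add hle
    omega
  · rw [prod_descFactorial_eq_zero hle, zero_mul, mul_zero, monomial_zero]
    exact isHomogeneous_zero _ _ _

lemma diffOp_eq_zero_of_lt {L f : MvPolynomial (Fin d) ℂ} {l n : ℕ}
    (hL : L.IsHomogeneous l) (hf : f.IsHomogeneous n) (hn : n < l) :
    diffOp L f = 0 := by
  rw [diffOp_apply_expand]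
  refine Finset.sum_eq_zero fun β hβ => ?_
  rw [diffOp_apply_monomial]
  refine Finset.sum_eq_zero fun α hα => ?_
  have hle : ¬ α ≤ β := by
    intro hcon
    have h1 : α.degree = l := isHom_degree hL (mem_support_iff.mp hα)
    have h2 : β.degree = n := isHom_degree hf (mem_support_iff.mp hβ)
    have h3 := degree_tsub_add hcon
    omega
  rw [prod_descFactorial_eq_zero hle, zero_mul, mul_zero, monomial_zero]


lemma totalDegree_diffOp_le {L : MvPolynomial (Fin d) ℂ} {l : ℕ} (hL : L.IsHomogeneous l)
    (f : MvPolynomial (Fin d) ℂ) :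
    (diffOp L f).totalDegree ≤ f.totalDegree - l := by
  conv_lhs => rw [← f.sum_homogeneousComponent]
  rw [map_sum]
  refine (totalDegree_finset_sum _ _).trans (Finset.sup_le fun i hi => ?_)
  have h1 := IsHomogeneous.totalDegree_le
    (isHomogeneous_diffOp hL (homogeneousComponent_isHomogeneous i f))
  have h2 := Finset.mem_range.mp hi
  omega

lemma diffOp_top_component {L : MvPolynomial (Fin d) ℂ} {l : ℕ} (hL : L.IsHomogeneous l)
    (f : MvPolynomial (Fin d) ℂ) (hlm : l ≤ f.totalDegree) (h : diffOp L f = 0) :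
    diffOp L (homogeneousComponent f.totalDegree f) = 0 := by
  set m := f.totalDegree with hm
  have expand : diffOp L f = ∑ i ∈ Finset.range (m + 1), diffOp L (homogeneousComponent i f) := by
    conv_lhs => rw [← f.sum_homogeneousComponent]
    rw [map_sum]
  have hcomp : homogeneousComponent (m - l) (diffOp L f) =
      diffOp L (homogeneousComponent m f) := by
    rw [expand, map_sum]
    rw [Finset.sum_eq_single m]
    · exact homogeneousComponent_of_mem
        (isHomogeneous_diffOp hL (homogeneousComponent_isHomogeneous m f)) |>.trans (if_pos rfl)
    · intro i hi hne
      rcases lt_or_ge i l with hil | hil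
      · rw [diffOp_eq_zero_of_lt hL (homogeneousComponent_isHomogeneous i f) hil, map_zero]
      · have hi' : i < m + 1 := Finset.mem_range.mp hi
        rw [homogeneousComponent_of_mem
          (isHomogeneous_diffOp hL (homogeneousComponent_isHomogeneous i f))]
        rw [if_neg]
        omega
    · intro hm'
      exact absurd (Finset.mem_range.mpr (by omega)) hm'
  rw [← hcomp, h, map_zero]

lemma coeff_conjPoly (L : MvPolynomial (Fin d) ℂ) (α : Fin d →₀ ℕ) :
    (conjPoly L).coeff α = (starRingEnd ℂ) (L.coeff α) := coeff_map _ _ _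

lemma support_conjPoly (L : MvPolynomial (Fin d) ℂ) : (conjPoly L).support = L.support :=
  MvPolynomial.support_map_of_injective _ (starRingEnd ℂ).injective

lemma conjPoly_mul (A B : MvPolynomial (Fin d) ℂ) :
    conjPoly (A * B) = conjPoly A * conjPoly B := map_mul _ A B

lemma isHomogeneous_conjPoly {L : MvPolynomial (Fin d) ℂ} {l : ℕ} (hL : L.IsHomogeneous l) :
    (conjPoly L).IsHomogeneous l := hL.map _

lemma coeff_zero_diffOp_conj (h : MvPolynomial (Fin d) ℂ) (β : Fin d →₀ ℕ) (c : ℂ) :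
    coeff 0 (diffOp (conjPoly h) (monomial β c)) =
      (starRingEnd ℂ) (h.coeff β) * ((∏ j, ((β j).factorial : ℂ)) * c) := by
  classical
  rw [diffOp_apply_monomial, coeff_sum, support_conjPoly]
  rw [Finset.sum_eq_single β]
  · rcases eq_or_ne (h.coeff β) 0 with h0 | h0
    · simp [h0, coeff_conjPoly]
    · rw [coeff_conjPoly, tsub_self, coeff_monomial, if_pos rfl]
      congr 2
      exact Finset.prod_congr rfl fun j _ => by rw [Nat.descFactorial_self]
  · intro α hα hne
    by_cases hle : α ≤ β
    · rw [coeff_monomial, if_neg]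
      intro hcon
      exact hne (le_antisymm hle (tsub_eq_zero_iff_le.mp hcon))
    · rw [prod_descFactorial_eq_zero hle, zero_mul, mul_zero, monomial_zero, coeff_zero]
  · intro hβ
    rw [coeff_conjPoly, MvPolynomial.notMem_support_iff.mp hβ, map_zero, zero_mul,
      monomial_zero, coeff_zero]


lemma pairing_self_ne_zero {h : MvPolynomial (Fin d) ℂ} (h0 : h ≠ 0) :
    coeff 0 (diffOp (conjPoly h) h) ≠ 0 := by
  have expand : coeff 0 (diffOp (conjPoly h) h) =
      ∑ β ∈ h.support,
        (starRingEnd ℂ) (h.coeff β) * ((∏ j, ((β j).factorial : ℂ)) * h.coeff β) := by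
    conv_lhs => rw [diffOp_apply_expand (conjPoly h) h]
    rw [coeff_sum]
    exact Finset.sum_congr rfl fun β _ => coeff_zero_diffOp_conj h β _
  have key : ∀ β : Fin d →₀ ℕ,
      (starRingEnd ℂ) (h.coeff β) * ((∏ j, ((β j).factorial : ℂ)) * h.coeff β)
        = ((((∏ j, ((β j).factorial : ℝ))) * Complex.normSq (h.coeff β) : ℝ) : ℂ) := by
    intro β
    push_cast
    rw [← Complex.mul_conj]
    ring
  rw [expand, Finset.sum_congr rfl fun β _ => key β, ← Complex.ofReal_sum,
    Complex.ofReal_ne_zero]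
  have hpos : 0 < ∑ β ∈ h.support, (∏ j, ((β j).factorial : ℝ)) * Complex.normSq (h.coeff β) := by
    apply Finset.sum_pos
    · intro β hβ
      apply mul_pos
      · exact Finset.prod_pos fun j _ => by positivity
      · exact Complex.normSq_pos.mpr (mem_support_iff.mp hβ)
    · exact MvPolynomial.support_nonempty.mpr h0
  exact hpos.ne'

lemma degree_eq_sum (β : Fin d →₀ ℕ) : (β.sum fun _ e => e) = β.degree := rfl

lemma homComp_totalDegree_ne_zero {p : MvPolynomial (Fin d) ℂ} (hp : p ≠ 0) :
    homogeneousComponent p.totalDegree p ≠ 0 := by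
  obtain ⟨β, hβ, hdeg⟩ := p.support.exists_mem_eq_sup
    (MvPolynomial.support_nonempty.mpr hp) (fun s => s.sum fun _ e => e)
  intro hc
  have hcoeff : coeff β (homogeneousComponent p.totalDegree p) = coeff β p := by
    rw [coeff_homogeneousComponent, if_pos]
    rw [degree_eq_sum] at hdeg
    exact hdeg.symm
  rw [hc, coeff_zero] at hcoeff
  exact mem_support_iff.mp hβ hcoeff.symm

lemma homComp_top_mul (p r : MvPolynomial (Fin d) ℂ) (a b : ℕ)
    (hp : p.totalDegree ≤ a) (hr : r.totalDegree ≤ b) :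
    homogeneousComponent (a + b) (p * r) =
      homogeneousComponent a p * homogeneousComponent b r := by
  classical
  have coeff_zero_of_lt : ∀ (u : MvPolynomial (Fin d) ℂ) (n : ℕ) (γ : Fin d →₀ ℕ),
      u.totalDegree ≤ n → n < γ.degree → coeff γ u = 0 := by
    intro u n γ hun hlt
    exact coeff_eq_zero_of_totalDegree_lt (lt_of_le_of_lt hun hlt)
  ext β
  rw [coeff_homogeneousComponent, coeff_mul, coeff_mul]
  split_ifs with hβ
  · refine Finset.sum_congr rfl fun x hx => ?_
    have hxadd : x.1 + x.2 = β := Finset.HasAntidiagonal.mem_antidiagonal.mp hx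
    have hdeg : x.1.degree + x.2.degree = a + b := by
      rw [← hβ, ← hxadd]
      simp only [Finsupp.degree_eq_weight_one]
      rw [map_add]
    rw [coeff_homogeneousComponent, coeff_homogeneousComponent]
    rcases eq_or_ne x.1.degree a with h1 | h1
    · rw [if_pos h1, if_pos (by omega)]
    · rw [if_neg h1]
      rcases lt_or_ge x.1.degree a with hlt | hgt
      · have : b < x.2.degree := by omega
        rw [coeff_zero_of_lt r b x.2 hr this, mul_zero, zero_mul]
      · have : a < x.1.degree := by omega
        rw [coeff_zero_of_lt p a x.1 hp this, zero_mul, zero_mul]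
  · symm
    refine Finset.sum_eq_zero fun x hx => ?_
    have hxadd : x.1 + x.2 = β := Finset.HasAntidiagonal.mem_antidiagonal.mp hx
    rw [coeff_homogeneousComponent, coeff_homogeneousComponent]
    rcases eq_or_ne x.1.degree a with h1 | h1
    · rcases eq_or_ne x.2.degree b with h2 | h2
      · exfalso
        apply hβ
        rw [← hxadd]
        simp only [Finsupp.degree_eq_weight_one] at h1 h2 ⊢
        rw [map_add, h1, h2]
      · rw [if_neg h2, mul_zero]
    · rw [if_neg h1, zero_mul]


lemma main_part1 {q : MvPolynomial (Fin d) ℂ} (hq0 : q ≠ 0) {L : MvPolynomial (Fin d) ℂ}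
    (hL : L = homogeneousComponent q.totalDegree q) :
    ∀ f : MvPolynomial (Fin d) ℂ,
      diffOp (conjPoly L) f = 0 → f ∈ Ideal.span {q} → f = 0 := by
  intro f hker hmem
  by_contra hf0
  obtain ⟨g, hg⟩ := Ideal.mem_span_singleton'.mp hmem
  have hg0 : g ≠ 0 := by
    rintro rfl
    rw [zero_mul] at hg
    exact hf0 hg.symm
  have hLhom : L.IsHomogeneous q.totalDegree := by
    rw [hL]; exact homogeneousComponent_isHomogeneous _ _
  have hL0 : L ≠ 0 := by rw [hL]; exact homComp_totalDegree_ne_zero hq0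
  have hG0 : homogeneousComponent g.totalDegree g ≠ 0 := homComp_totalDegree_ne_zero hg0
  set l := q.totalDegree with hldef
  set b := g.totalDegree with hbdef
  set G := homogeneousComponent b g with hGdef
  have hmul : homogeneousComponent (b + l) f = G * L := by
    rw [← hg, hL]
    exact homComp_top_mul g q b l le_rfl le_rfl
  have hGL0 : G * L ≠ 0 := mul_ne_zero hG0 hL0
  have hble : b + l ≤ f.totalDegree := by
    by_contra hlt
    push_neg at hlt
    have h0 : homogeneousComponent (b + l) f = 0 := homogeneousComponent_eq_zero _ _ hlt
    rw [hmul] at h0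
    exact hGL0 h0
  have hge : f.totalDegree ≤ b + l := by
    calc f.totalDegree = (g * q).totalDegree := by rw [hg]
    _ ≤ b + l := totalDegree_mul g q
  have hm : f.totalDegree = b + l := le_antisymm hge hble
  have hF : homogeneousComponent f.totalDegree f = G * L := by rw [hm, hmul]
  have hlm : l ≤ f.totalDegree := by omega
  have hkerF : diffOp (conjPoly L) (homogeneousComponent f.totalDegree f) = 0 :=
    diffOp_top_component (isHomogeneous_conjPoly hLhom) f hlm hker
  rw [hF] at hkerF
  have hzero : diffOp (conjPoly (G * L)) (G * L) = 0 := by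
    rw [conjPoly_mul, diffOp_mul, Module.End.mul_apply, hkerF, map_zero]
  exact pairing_self_ne_zero hGL0 (by rw [hzero, coeff_zero])

lemma main_part2 {q : MvPolynomial (Fin d) ℂ} (hq0 : q ≠ 0) {L : MvPolynomial (Fin d) ℂ}
    (hL : L = homogeneousComponent q.totalDegree q) (f : MvPolynomial (Fin d) ℂ) :
    ∃ u v : MvPolynomial (Fin d) ℂ, u ∈ LinearMap.ker (diffOp (conjPoly L)) ∧
      v ∈ Ideal.span {q} ∧ f = u + v := by
  have hLhom : (conjPoly L).IsHomogeneous q.totalDegree :=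
    isHomogeneous_conjPoly (by rw [hL]; exact homogeneousComponent_isHomogeneous _ _)
  set l := q.totalDegree with hldef
  set n := f.totalDegree with hndef
  set V := restrictTotalDegree (Fin d) ℂ n with hVdef
  set ψ : MvPolynomial (Fin d) ℂ →ₗ[ℂ] MvPolynomial (Fin d) ℂ :=
    (diffOp (conjPoly L)) ∘ₗ (LinearMap.mulLeft ℂ q) with hψdef
  have hψ_apply : ∀ x, ψ x = diffOp (conjPoly L) (q * x) := fun x => rfl
  have hmaps : ∀ x ∈ V, ψ x ∈ V := by
    intro x hx
    rw [hVdef, mem_restrictTotalDegree] at hx ⊢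
    rw [hψ_apply]
    have h1 : (q * x).totalDegree ≤ l + n :=
      le_trans (totalDegree_mul q x) (add_le_add le_rfl hx)
    have h2 := totalDegree_diffOp_le hLhom (q * x)
    omega
  set φ : V →ₗ[ℂ] V := ψ.restrict hmaps with hφdef
  have hinj : Function.Injective φ := by
    rw [injective_iff_map_eq_zero]
    intro x hx
    have hψ0 : ψ (x : MvPolynomial (Fin d) ℂ) = 0 := congrArg Subtype.val hx
    rw [hψ_apply] at hψ0
    have hmem : q * (x : MvPolynomial (Fin d) ℂ) ∈ Ideal.span {q} :=
      Ideal.mem_span_singleton'.mpr ⟨x, mul_comm _ _⟩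
    have h0 := FischerProof.main_part1 hq0 hL _ hψ0 hmem
    rcases mul_eq_zero.mp h0 with h | h
    · exact absurd h hq0
    · exact Subtype.ext h
  have hsurj : Function.Surjective φ := LinearMap.injective_iff_surjective.mp hinj
  have hyV : diffOp (conjPoly L) f ∈ V := by
    rw [hVdef, mem_restrictTotalDegree]
    have := totalDegree_diffOp_le hLhom f
    omega
  obtain ⟨g, hgeq⟩ := hsurj ⟨diffOp (conjPoly L) f, hyV⟩
  have hgeq' : diffOp (conjPoly L) (q * (g : MvPolynomial (Fin d) ℂ)) = diffOp (conjPoly L) f := by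
    have := congrArg Subtype.val hgeq
    rw [← hψ_apply]
    exact this
  refine ⟨f - q * g, q * g, ?_, ?_, by ring⟩
  · rw [LinearMap.mem_ker, map_sub, hgeq', sub_self]
  · exact Ideal.mem_span_singleton'.mpr ⟨g, mul_comm _ _⟩

end FischerProof

theorem leading_form_kernel_complements_ideal {d : ℕ} (q : MvPolynomial (Fin d) ℂ)
    (hq0 : q ≠ 0) (L : MvPolynomial (Fin d) ℂ)
    (hL : L = homogeneousComponent q.totalDegree q) :
    (∀ f : MvPolynomial (Fin d) ℂ,
        diffOp (conjPoly L) f = 0 → f ∈ Ideal.span {q} → f = 0) ∧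
    IsCompl (LinearMap.ker (diffOp (conjPoly L))) ((Ideal.span {q}).restrictScalars ℂ) := by
  refine ⟨FischerProof.main_part1 hq0 hL, ?_, ?_⟩
  · rw [Submodule.disjoint_def]
    intro x hx hx'
    exact FischerProof.main_part1 hq0 hL x (LinearMap.mem_ker.mp hx)
      ((Submodule.restrictScalars_mem ℂ _ x).mp hx')
  · rw [codisjoint_iff]
    rw [Submodule.eq_top_iff']
    intro f
    obtain ⟨u, v, hu, hv, huv⟩ := FischerProof.main_part2 hq0 hL f
    exact Submodule.mem_sup.mpr ⟨u, hu, v, (Submodule.restrictScalars_mem ℂ _ v).mpr hv, huv.symm⟩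
end

section
/- For every nonzero homogeneous polynomial L ∈ ℂ[x₁,…,x_d], the space of polynomial solutions of L̄(D)f = 0 has a complement in ℂ[x₁,…,x_d] which is an ideal: namely, any principal ideal ⟨q⟩ where q has leading form q^∧ = L. In particular, the space of harmonic polynomials in d variables is complemented by the ideal ⟨x₁² + ⋯ + x_d²⟩. -/
open MvPolynomial

namespace FischerAux

variable {d : ℕ}

abbrev V (d : ℕ) := MvPolynomial (Fin d) ℂ

noncomputable def Pop (α : Fin d →₀ ℕ) : Module.End ℂ (V d) :=
  ((List.finRange d).map
    (fun j => ((pderiv j).toLinearMap : Module.End ℂ (V d)) ^ (α j))).prod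

lemma pow_pderiv_monomial (j : Fin d) (k : ℕ) (β : Fin d →₀ ℕ) (c : ℂ) :
    (((pderiv j).toLinearMap : Module.End ℂ (V d)) ^ k) (monomial β c)
      = monomial (β - Finsupp.single j k) (c * ((β j).descFactorial k)) := by
  induction k with
  | zero => simp
  | succ k ih =>
      rw [pow_succ', Module.End.mul_apply, ih]
      simp only [Derivation.coeFn_coe, pderiv_monomial]
      congr 1
      · rw [tsub_tsub, ← Finsupp.single_add]
      · rw [Finsupp.tsub_apply, Finsupp.single_eq_same, Nat.descFactorial_succ]
        push_cast
        ring

lemma listsum_apply_of_not_mem (α : Fin d →₀ ℕ) (t : List (Fin d)) (j : Fin d) (hj : j ∉ t) :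
    ((t.map (fun i => Finsupp.single i (α i))).sum) j = 0 := by
  induction t with
  | nil => simp
  | cons i t ih =>
      simp only [List.map_cons, List.sum_cons, Finsupp.add_apply]
      rw [Finsupp.single_eq_of_ne' (by rintro rfl; exact hj List.mem_cons_self),
        ih (fun h => hj (List.mem_cons_of_mem _ h))]

lemma prod_map_pderiv_apply (α β : Fin d →₀ ℕ) (c : ℂ) (t : List (Fin d)) (ht : t.Nodup) :
    ((t.map (fun j => ((pderiv j).toLinearMap : Module.End ℂ (V d)) ^ (α j))).prod)
        (monomial β c)
      = monomial (β - (t.map (fun i => Finsupp.single i (α i))).sum)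
          (c * ((t.map (fun j => ((β j).descFactorial (α j) : ℂ))).prod)) := by
  induction t with
  | nil => simp
  | cons j t ih =>
      have hnd := List.nodup_cons.mp ht
      simp only [List.map_cons, List.prod_cons, List.sum_cons, Module.End.mul_apply]
      rw [ih hnd.2, pow_pderiv_monomial]
      have hβj : (β - (t.map (fun i => Finsupp.single i (α i))).sum) j = β j := by
        rw [Finsupp.tsub_apply, listsum_apply_of_not_mem α t j hnd.1, Nat.sub_zero]
      rw [hβj]
      congr 1
      · rw [tsub_tsub, add_comm]
      · ring

lemma Pop_monomial (α β : Fin d →₀ ℕ) (c : ℂ) :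
    Pop α (monomial β c)
      = monomial (β - α) (c * ∏ j : Fin d, ((β j).descFactorial (α j) : ℂ)) := by
  rw [Pop, prod_map_pderiv_apply α β c _ (List.nodup_finRange d)]
  have hsum : ((List.finRange d).map (fun i => Finsupp.single i (α i))).sum = α := by
    rw [← Fin.sum_univ_def]
    ext i
    rw [Finsupp.finset_sum_apply]
    rw [Finset.sum_eq_single i (fun b _ hb => Finsupp.single_eq_of_ne' hb) (by simp)]
    exact Finsupp.single_eq_same
  rw [hsum, ← Fin.prod_univ_def]

lemma diffOp_eq_Pop (L : V d) : diffOp L = ∑ α ∈ L.support, L.coeff α • Pop α := rfl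

lemma diffOp_eq_superset (L : V d) (s : Finset (Fin d →₀ ℕ)) (hs : L.support ⊆ s) :
    diffOp L = ∑ α ∈ s, L.coeff α • Pop α := by
  rw [diffOp_eq_Pop]
  exact Finset.sum_subset hs (fun α _ hα => by
    rw [notMem_support_iff.mp hα, zero_smul])

lemma diffOp_monomial (β : Fin d →₀ ℕ) (c : ℂ) :
    diffOp (monomial β c) = c • Pop β := by
  rw [diffOp_eq_superset _ {β} support_monomial_subset, Finset.sum_singleton,
    coeff_monomial, if_pos rfl]

lemma diffOp_add (P Q : V d) : diffOp (P + Q) = diffOp P + diffOp Q := by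
  rw [diffOp_eq_superset P (P.support ∪ Q.support) Finset.subset_union_left,
    diffOp_eq_superset Q (P.support ∪ Q.support) Finset.subset_union_right,
    diffOp_eq_superset (P + Q) (P.support ∪ Q.support) support_add,
    ← Finset.sum_add_distrib]
  exact Finset.sum_congr rfl (fun α _ => by rw [coeff_add, add_smul])

lemma Nat.descFactorial_add' (n a b : ℕ) :
    n.descFactorial (a + b) = n.descFactorial b * (n - b).descFactorial a := by
  induction a with
  | zero => simp
  | succ a ih =>
      have : a + 1 + b = (a + b) + 1 := by omega
      rw [this, Nat.descFactorial_succ, ih, Nat.descFactorial_succ]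
      have : n - (a + b) = n - b - a := by omega
      rw [this]; ring

lemma Pop_mul (α β : Fin d →₀ ℕ) : Pop (α + β) = Pop α * Pop β := by
  apply LinearMap.ext
  intro p
  induction p using MvPolynomial.induction_on' with
  | monomial γ c =>
      rw [Module.End.mul_apply, Pop_monomial, Pop_monomial, Pop_monomial]
      congr 1
      · rw [tsub_tsub, add_comm]
      · rw [mul_assoc, ← Finset.prod_mul_distrib]
        congr 1
        apply Finset.prod_congr rfl
        intro j _
        rw [Finsupp.add_apply, Finsupp.tsub_apply]
        rw [← Nat.cast_mul, ← Nat.descFactorial_add' (γ j) (α j) (β j)]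
  | add p q hp hq =>
      rw [map_add, map_add, hp, hq]

lemma diffOp_mul (P Q : V d) : diffOp (P * Q) = diffOp P * diffOp Q := by
  induction P using MvPolynomial.induction_on' with
  | add p q hp hq => rw [add_mul, diffOp_add, diffOp_add, hp, hq, add_mul]
  | monomial α a =>
      induction Q using MvPolynomial.induction_on' with
      | add p q hp hq => rw [mul_add, diffOp_add, diffOp_add, hp, hq, mul_add]
      | monomial β b =>
          rw [monomial_mul, diffOp_monomial, diffOp_monomial, diffOp_monomial, Pop_mul,
            smul_mul_smul_comm]

noncomputable def factC (α : Fin d →₀ ℕ) : ℂ := ∏ j : Fin d, ((α j).factorial : ℂ)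

lemma coeff0_Pop (α : Fin d →₀ ℕ) (f : V d) :
    coeff 0 (Pop α f) = coeff α f * factC α := by
  induction f using MvPolynomial.induction_on' with
  | add p q hp hq => rw [map_add, coeff_add, coeff_add, hp, hq, add_mul]
  | monomial β c =>
      rw [Pop_monomial, coeff_monomial, coeff_monomial]
      by_cases hβ : β = α
      · subst hβ
        rw [if_pos (tsub_self β), if_pos rfl, factC]
        congr 1
        exact Finset.prod_congr rfl (fun j _ => by rw [Nat.descFactorial_self])
      · rw [if_neg hβ, zero_mul]
        by_cases h0 : β - α = 0
        · rw [if_pos h0]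
          have hle : β ≤ α := tsub_eq_zero_iff_le.mp h0
          obtain ⟨j, hj⟩ : ∃ j, β j ≠ α j := by
            by_contra h
            push_neg at h
            exact hβ (Finsupp.ext h)
          have hjlt : β j < α j := lt_of_le_of_ne (hle j) hj
          have : ((β j).descFactorial (α j) : ℂ) = 0 := by
            rw [Nat.descFactorial_eq_zero_iff_lt.mpr hjlt, Nat.cast_zero]
          rw [Finset.prod_eq_zero (Finset.mem_univ j) this, mul_zero]
        · rw [if_neg h0]

lemma diffOp_conj_apply (g f : V d) :
    diffOp (conjPoly g) f
      = ∑ α ∈ g.support, (starRingEnd ℂ) (g.coeff α) • Pop α f := by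
  have hs : (conjPoly g).support ⊆ g.support := by
    intro α hα
    rw [mem_support_iff] at *
    rw [conjPoly, coeff_map] at hα
    exact fun h => hα (by rw [h, map_zero])
  rw [diffOp_eq_superset _ _ hs]
  rw [LinearMap.sum_apply]
  apply Finset.sum_congr rfl
  intro α _
  rw [LinearMap.smul_apply, conjPoly, coeff_map]

noncomputable def B (f g : V d) : ℂ := coeff 0 (diffOp (conjPoly g) f)

lemma B_eq (f g : V d) :
    B f g = ∑ α ∈ g.support, (starRingEnd ℂ) (g.coeff α) * (coeff α f * factC α) := by
  rw [B, diffOp_conj_apply, coeff_sum]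
  apply Finset.sum_congr rfl
  intro α _
  rw [coeff_smul, coeff0_Pop, smul_eq_mul]

lemma B_self_ne_zero {f : V d} (hf : f ≠ 0) : B f f ≠ 0 := by
  have hB : B f f = ((∑ α ∈ f.support,
      Complex.normSq (coeff α f) * ((∏ j : Fin d, ((α j).factorial : ℝ))) : ℝ) : ℂ) := by
    rw [B_eq]
    push_cast
    apply Finset.sum_congr rfl
    intro α _
    rw [factC, ← mul_assoc, mul_comm ((starRingEnd ℂ) (coeff α f)), Complex.mul_conj]
  rw [hB]
  rw [Ne, Complex.ofReal_eq_zero]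
  have hpos : 0 < ∑ α ∈ f.support,
      Complex.normSq (coeff α f) * ((∏ j : Fin d, ((α j).factorial : ℝ))) := by
    apply Finset.sum_pos
    · intro α hα
      apply mul_pos
      · exact Complex.normSq_pos.mpr (mem_support_iff.mp hα)
      · apply Finset.prod_pos
        intro j _
        exact_mod_cast Nat.factorial_pos _
    · exact support_nonempty.mpr hf
  exact ne_of_gt hpos

lemma B_adjoint (f g h : V d) : B f (g * h) = B (diffOp (conjPoly g) f) h := by
  rw [B, B]
  have : conjPoly (g * h) = conjPoly h * conjPoly g := by
    rw [conjPoly, conjPoly, conjPoly, map_mul, mul_comm]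
  rw [this, diffOp_mul, Module.End.mul_apply]

lemma diff_mul_ne_zero {L h : V d} (hL : L ≠ 0) (hh : h ≠ 0) :
    diffOp (conjPoly L) (L * h) ≠ 0 := by
  intro H
  have h1 : B (L * h) (L * h) = B (diffOp (conjPoly L) (L * h)) h := B_adjoint _ _ _
  rw [H] at h1
  have h2 : B (0 : V d) h = 0 := by rw [B, map_zero, coeff_zero]
  rw [h2] at h1
  exact B_self_ne_zero (mul_ne_zero hL hh) h1

lemma deg_of_mem_support {f : V d} {n : ℕ} (hf : f.IsHomogeneous n) {β : Fin d →₀ ℕ}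
    (hβ : β ∈ f.support) : β.degree = n := by
  by_contra h
  exact (mem_support_iff.mp hβ) (hf.coeff_eq_zero h)

lemma Fdeg_add (a b : Fin d →₀ ℕ) : (a + b).degree = a.degree + b.degree := by
  rw [Finsupp.degree_eq_weight_one, map_add]

lemma Fdeg_mono {a b : Fin d →₀ ℕ} (h : a ≤ b) : a.degree ≤ b.degree := by
  have : a + (b - a) = b := add_tsub_cancel_of_le h
  calc a.degree ≤ a.degree + (b - a).degree := Nat.le_add_right _ _
    _ = b.degree := by rw [← Fdeg_add, this]

lemma Pop_monomial_zero_of_not_le {α β : Fin d →₀ ℕ} (h : ¬ α ≤ β) (c : ℂ) :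
    Pop α (monomial β c) = 0 := by
  rw [Pop_monomial]
  obtain ⟨j, hj⟩ : ∃ j, ¬ α j ≤ β j := by
    by_contra hc; push_neg at hc; exact h (Finsupp.le_def.mpr hc)
  have : ((β j).descFactorial (α j) : ℂ) = 0 := by
    rw [Nat.descFactorial_eq_zero_iff_lt.mpr (by omega), Nat.cast_zero]
  rw [Finset.prod_eq_zero (Finset.mem_univ j) this, mul_zero, monomial_zero]

lemma Pop_isHomogeneous {α : Fin d →₀ ℕ} {f : V d} {k : ℕ}
    (hf : f.IsHomogeneous (k + α.degree)) : (Pop α f).IsHomogeneous k := by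
  conv_lhs => rw [f.as_sum]
  rw [map_sum]
  apply MvPolynomial.IsHomogeneous.sum
  intro β hβ
  by_cases hle : α ≤ β
  · rw [Pop_monomial]
    apply isHomogeneous_monomial
    have h1 : (β - α) + α = β := tsub_add_cancel_of_le hle
    have h2 : β.degree = k + α.degree := deg_of_mem_support hf hβ
    have := Fdeg_add (β - α) α
    rw [h1, h2] at this
    omega
  · rw [Pop_monomial_zero_of_not_le hle]
    exact isHomogeneous_zero _ _ _

lemma Pop_zero_of_lt {α : Fin d →₀ ℕ} {f : V d} {k : ℕ}
    (hf : f.IsHomogeneous k) (hk : k < α.degree) : Pop α f = 0 := by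
  conv_lhs => rw [f.as_sum]
  rw [map_sum]
  apply Finset.sum_eq_zero
  intro β hβ
  apply Pop_monomial_zero_of_not_le
  intro hle
  have := Fdeg_mono hle
  rw [deg_of_mem_support hf hβ] at this
  omega

lemma diffOp_conj_isHomogeneous {L : V d} {l k : ℕ} (hL : L.IsHomogeneous l) {f : V d}
    (hf : f.IsHomogeneous (k + l)) : (diffOp (conjPoly L) f).IsHomogeneous k := by
  rw [diffOp_conj_apply]
  apply MvPolynomial.IsHomogeneous.sum
  intro α hα
  rw [← mem_homogeneousSubmodule]
  apply Submodule.smul_mem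
  rw [mem_homogeneousSubmodule]
  apply Pop_isHomogeneous
  rw [deg_of_mem_support hL hα]
  exact hf

lemma diffOp_conj_zero_of_lt {L : V d} {l k : ℕ} (hL : L.IsHomogeneous l) {f : V d}
    (hf : f.IsHomogeneous k) (hkl : k < l) : diffOp (conjPoly L) f = 0 := by
  rw [diffOp_conj_apply]
  apply Finset.sum_eq_zero
  intro α hα
  rw [Pop_zero_of_lt hf (by rw [deg_of_mem_support hL hα]; exact hkl), smul_zero]

lemma hc_self {p : V d} {n : ℕ} (hp : p.IsHomogeneous n) : homogeneousComponent n p = p := by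
  rw [homogeneousComponent_of_mem (mem_homogeneousSubmodule n p |>.mpr hp), if_pos rfl]

lemma hc_of_ne {p : V d} {n m : ℕ} (hp : p.IsHomogeneous n) (h : m ≠ n) :
    homogeneousComponent m p = 0 := by
  rw [homogeneousComponent_of_mem (mem_homogeneousSubmodule n p |>.mpr hp), if_neg h]

lemma hc_diffOp_zero {L : V d} {l m : ℕ} (hL : L.IsHomogeneous l) {r : V d}
    (hr : homogeneousComponent (m + l) r = 0) :
    homogeneousComponent m (diffOp (conjPoly L) r) = 0 := by
  conv_lhs => rw [← sum_homogeneousComponent r]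
  rw [map_sum, map_sum]
  apply Finset.sum_eq_zero
  intro i _
  by_cases hi : i = m + l
  · rw [hi, hr, map_zero, map_zero]
  · by_cases hil : i < l
    · rw [diffOp_conj_zero_of_lt hL (homogeneousComponent_isHomogeneous i r) hil, map_zero]
    · have : (homogeneousComponent i r).IsHomogeneous ((i - l) + l) := by
        have h2 : (i - l) + l = i := by omega
        rw [h2]
        exact homogeneousComponent_isHomogeneous i r
      exact hc_of_ne (diffOp_conj_isHomogeneous hL this) (by omega)

lemma hc_top_mul (g q : V d) :
    homogeneousComponent (g.totalDegree + q.totalDegree) (g * q)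
      = homogeneousComponent g.totalDegree g * homogeneousComponent q.totalDegree q := by
  classical
  set m := g.totalDegree
  set l := q.totalDegree
  ext γ
  rw [coeff_homogeneousComponent]
  by_cases hγ : γ.degree = m + l
  · rw [if_pos hγ, coeff_mul, coeff_mul]
    apply Finset.sum_congr rfl
    rintro ⟨u, v⟩ huv
    rw [Finset.HasAntidiagonal.mem_antidiagonal] at huv
    dsimp only
    have hdeg : u.degree + v.degree = m + l := by rw [← Fdeg_add, huv, hγ]
    rw [coeff_homogeneousComponent, coeff_homogeneousComponent]
    by_cases hu : u.degree = m
    · rw [if_pos hu, if_pos (by omega)]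
    · have hdu : u.degree ≤ m ∨ coeff u g = 0 := by
        by_cases h : u.degree ≤ m
        · exact Or.inl h
        · refine Or.inr (coeff_eq_zero_of_totalDegree_lt ?_)
          have hud : u.degree = ∑ i ∈ u.support, u i := rfl
          omega
      rcases hdu with h | h
      · have hv : ¬ v.degree = l := by omega
        have hvq : coeff v q = 0 := by
          refine coeff_eq_zero_of_totalDegree_lt ?_
          have hvd : v.degree = ∑ i ∈ v.support, v i := rfl
          omega
        simp [hvq, if_neg hu]
      · rw [h, if_neg hu, zero_mul, zero_mul]
  · rw [if_neg hγ]
    have : (homogeneousComponent m g * homogeneousComponent l q).IsHomogeneous (m + l) :=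
      (homogeneousComponent_isHomogeneous m g).mul (homogeneousComponent_isHomogeneous l q)
    exact (this.coeff_eq_zero hγ).symm

lemma hc_top_ne_zero {p : V d} (hp : p ≠ 0) :
    homogeneousComponent p.totalDegree p ≠ 0 := by
  classical
  obtain ⟨γ, hγ, hdeg⟩ : ∃ γ ∈ p.support, (fun s : Fin d →₀ ℕ => ∑ i ∈ s.support, s i) γ
      = p.totalDegree := by
    obtain ⟨γ, hγ, h⟩ := Finset.exists_mem_eq_sup p.support (support_nonempty.mpr hp)
      (fun s : Fin d →₀ ℕ => s.sum fun _ e => e)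
    exact ⟨γ, hγ, by rw [MvPolynomial.totalDegree, h]; rfl⟩
  intro H
  have hco : coeff γ (homogeneousComponent p.totalDegree p) = coeff γ p := by
    rw [coeff_homogeneousComponent, if_pos (by rw [← hdeg]; rfl)]
  rw [H, coeff_zero] at hco
  exact (mem_support_iff.mp hγ) hco.symm

lemma top_sub_lt {p : V d} (hne : p - homogeneousComponent p.totalDegree p ≠ 0)
    (hpos : 0 < p.totalDegree) :
    (p - homogeneousComponent p.totalDegree p).totalDegree < p.totalDegree := by
  classical
  set s := p - homogeneousComponent p.totalDegree p with hs
  rw [MvPolynomial.totalDegree, Finset.sup_lt_iff (by simpa using hpos)]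
  intro γ hγ
  have hcoeff : coeff γ s ≠ 0 := mem_support_iff.mp hγ
  have hcs : coeff γ s = coeff γ p - (if γ.degree = p.totalDegree then coeff γ p else 0) := by
    rw [hs, coeff_sub, coeff_homogeneousComponent]
  have hdeg : γ.degree = ∑ i ∈ γ.support, γ i := rfl
  by_cases h1 : γ.degree = p.totalDegree
  · rw [if_pos h1, sub_self] at hcs; exact absurd hcs hcoeff
  · rw [if_neg h1, sub_zero] at hcs
    have h2 : ¬ p.totalDegree < γ.degree := by
      intro h
      exact (hcs ▸ hcoeff) (coeff_eq_zero_of_totalDegree_lt (by omega))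
    have h3 : (γ.sum fun _ e => e) = γ.degree := rfl
    rw [h3]
    omega


lemma findim (n : ℕ) : FiniteDimensional ℂ (homogeneousSubmodule (Fin d) ℂ n) := by
  have hle : homogeneousSubmodule (Fin d) ℂ n ≤ restrictTotalDegree (Fin d) ℂ n := by
    intro p hp
    rw [mem_restrictTotalDegree]
    exact ((mem_homogeneousSubmodule _ _).mp hp).totalDegree_le
  exact Submodule.finiteDimensional_of_le hle

lemma solve_hom {L : V d} {l : ℕ} (hL0 : L ≠ 0) (hL : L.IsHomogeneous l) (m : ℕ) (f : V d)
    (hf : f.IsHomogeneous m) :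
    ∃ g : V d, g.IsHomogeneous (m - l) ∧ (m < l → g = 0) ∧
      diffOp (conjPoly L) (f - L * g) = 0 := by
  by_cases hml : m < l
  · exact ⟨0, isHomogeneous_zero _ _ _, fun _ => rfl,
      by rw [mul_zero, sub_zero]; exact diffOp_conj_zero_of_lt hL hf hml⟩
  · have hmm : (m - l) + l = m := by omega
    set H := homogeneousSubmodule (Fin d) ℂ (m - l) with hH
    haveI := findim (d := d) (m - l)
    set S : V d →ₗ[ℂ] V d := (diffOp (conjPoly L)) ∘ₗ (LinearMap.mulLeft ℂ L) with hS
    have hmaps : ∀ x ∈ H, S x ∈ H := by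
      intro x hx
      have hx' : x.IsHomogeneous (m - l) := (mem_homogeneousSubmodule _ _).mp hx
      have h1 : (L * x).IsHomogeneous ((m - l) + l) := by
        rw [add_comm]; exact hL.mul hx'
      have : S x = diffOp (conjPoly L) (L * x) := rfl
      rw [hH, mem_homogeneousSubmodule, this]
      exact diffOp_conj_isHomogeneous hL h1
    set T := S.restrict hmaps with hT
    have hinj : Function.Injective T := by
      rw [injective_iff_map_eq_zero]
      intro x hx
      have hval : S (x : V d) = 0 := by
        have := congrArg Subtype.val hx
        rwa [LinearMap.restrict_coe_apply] at this
      by_contra hne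
      have hxne : (x : V d) ≠ 0 := fun h => hne (Subtype.ext h)
      exact diff_mul_ne_zero hL0 hxne hval
    have hsurj := LinearMap.injective_iff_surjective.mp hinj
    have hfd : diffOp (conjPoly L) f ∈ H := by
      rw [hH, mem_homogeneousSubmodule]
      exact diffOp_conj_isHomogeneous hL (by rw [hmm]; exact hf)
    obtain ⟨g, hg⟩ := hsurj ⟨diffOp (conjPoly L) f, hfd⟩
    refine ⟨(g : V d), (mem_homogeneousSubmodule _ _).mp g.2, fun h => absurd h hml, ?_⟩
    have hval : S (g : V d) = diffOp (conjPoly L) f := by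
      have := congrArg Subtype.val hg
      rwa [hT, LinearMap.restrict_coe_apply] at this
    have : diffOp (conjPoly L) (L * (g : V d)) = diffOp (conjPoly L) f := hval
    rw [map_sub, this, sub_self]

lemma deg_eq {L q : V d} {l : ℕ} (hL0 : L ≠ 0) (hL : L.IsHomogeneous l)
    (hq : homogeneousComponent q.totalDegree q = L) : q.totalDegree = l := by
  have h1 : L.IsHomogeneous q.totalDegree := by
    rw [← hq]; exact homogeneousComponent_isHomogeneous _ _
  exact h1.inj_right hL hL0

lemma mem_sup_of_deg_le {L q : V d} {l : ℕ} (hL0 : L ≠ 0) (hL : L.IsHomogeneous l)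
    (hq : homogeneousComponent q.totalDegree q = L) :
    ∀ n : ℕ, ∀ f : V d, f.totalDegree ≤ n →
      f ∈ LinearMap.ker (diffOp (conjPoly L)) ⊔ (Ideal.span {q}).restrictScalars ℂ := by
  have hq0 : q ≠ 0 := by
    intro h
    rw [h, map_zero] at hq
    exact hL0 hq.symm
  have hql : q.totalDegree = l := deg_eq hL0 hL hq
  intro n
  induction n using Nat.strong_induction_on with
  | _ n ih =>
  intro f hf
  have hex : ∀ m : ℕ, ∃ g : V d, g.IsHomogeneous (m - l) ∧ (m < l → g = 0) ∧
      diffOp (conjPoly L) (homogeneousComponent m f - L * g) = 0 :=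
    fun m => solve_hom hL0 hL m _ (homogeneousComponent_isHomogeneous m f)
  choose g hg1 hg2 hg3 using hex
  set G := ∑ m ∈ Finset.range (n + 1), g m with hG
  have hfsum : f = ∑ m ∈ Finset.range (n + 1), homogeneousComponent m f := by
    have h2 : ∑ m ∈ Finset.range (f.totalDegree + 1), homogeneousComponent m f
        = ∑ m ∈ Finset.range (n + 1), homogeneousComponent m f := by
      apply Finset.sum_subset (Finset.range_subset_range.mpr (by omega : f.totalDegree + 1 ≤ n + 1))
      intro m _ hm
      rw [Finset.mem_range, not_lt] at hm
      exact homogeneousComponent_eq_zero m f (by omega)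
    rw [← h2, sum_homogeneousComponent]
  have hker : f - L * G ∈ LinearMap.ker (diffOp (conjPoly L)) := by
    rw [LinearMap.mem_ker]
    have : f - L * G = ∑ m ∈ Finset.range (n + 1),
        (homogeneousComponent m f - L * g m) := by
      rw [Finset.sum_sub_distrib, ← hfsum, hG, Finset.mul_sum]
    rw [this, map_sum]
    exact Finset.sum_eq_zero (fun m _ => hg3 m)
  have hqG : q * G ∈ (Ideal.span {q}).restrictScalars ℂ := by
    rw [Submodule.restrictScalars_mem]
    exact Ideal.mem_span_singleton.mpr ⟨G, rfl⟩
  by_cases hLq : L - q = 0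
  · have hLqe : L = q := by linear_combination hLq
    have : f = (f - L * G) + q * G := by rw [← hLqe]; ring
    rw [this]
    exact Submodule.add_mem_sup hker hqG
  · -- L ≠ q
    have hl1 : 1 ≤ l := by
      by_contra h
      have hl0 : l = 0 := by omega
      have : q.IsHomogeneous 0 := by
        apply isHomogeneous_of_totalDegree_zero
        omega
      have : homogeneousComponent q.totalDegree q = q := by
        rw [hql, hl0]; exact hc_self this
      rw [hq] at this
      exact hLq (by rw [this, sub_self])
  -- degree bounds
    have hdLq : (L - q).totalDegree < l := by
      have h1 : L - q = -(q - homogeneousComponent q.totalDegree q) := by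
        rw [hq]; ring
      rw [h1, totalDegree_neg]
      have h2 : q - homogeneousComponent q.totalDegree q ≠ 0 := by
        intro h
        apply hLq
        rw [← hq]
        have : q = homogeneousComponent q.totalDegree q := by linear_combination h
        linear_combination - this
      have := top_sub_lt h2 (by omega)
      omega
    by_cases hnl : n < l
    · have hG0 : G = 0 := by
        rw [hG]
        apply Finset.sum_eq_zero
        intro m hm
        rw [Finset.mem_range] at hm
        exact hg2 m (by omega)
      have : f = (f - L * G) + q * G := by rw [hG0]; ring
      rw [this]
      exact Submodule.add_mem_sup hker hqG
    · have hdG : G.totalDegree ≤ n - l := by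
        rw [hG]
        apply MvPolynomial.totalDegree_finsetSum_le
        intro m hm
        rw [Finset.mem_range] at hm
        have := (hg1 m).totalDegree_le
        omega
      have hdr : ((L - q) * G).totalDegree ≤ n - 1 := by
        have h1 := MvPolynomial.totalDegree_mul (L - q) G
        omega
      have hrmem := ih (n - 1) (by omega) ((L - q) * G) hdr
      have : f = ((f - L * G) + q * G) + (L - q) * G := by ring
      rw [this]
      apply Submodule.add_mem
      · exact Submodule.add_mem_sup hker hqG
      · exact hrmem

lemma disjoint_ker_span {L q : V d} {l : ℕ} (hL0 : L ≠ 0) (hL : L.IsHomogeneous l)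
    (hq : homogeneousComponent q.totalDegree q = L) :
    ∀ f : V d, f ∈ LinearMap.ker (diffOp (conjPoly L)) →
      f ∈ (Ideal.span {q}).restrictScalars ℂ → f = 0 := by
  have hql : q.totalDegree = l := deg_eq hL0 hL hq
  intro f hker hspan
  rw [Submodule.restrictScalars_mem, Ideal.mem_span_singleton] at hspan
  obtain ⟨c, rfl⟩ := hspan
  by_cases hc : c = 0
  · rw [hc, mul_zero]
  · exfalso
    set m := c.totalDegree with hm
    have htop : homogeneousComponent m c ≠ 0 := hc_top_ne_zero hc
    have htophom : (homogeneousComponent m c).IsHomogeneous m :=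
      homogeneousComponent_isHomogeneous m c
    set A := homogeneousComponent m c * L with hA
    have hAhom : A.IsHomogeneous (m + l) := htophom.mul hL
    have hq' : homogeneousComponent l q = L := by rw [← hql]; exact hq
    have hM : homogeneousComponent (m + l) (c * q) = A := by
      have h2 := hc_top_mul c q
      rw [hql, hq', ← hm] at h2
      rw [h2, hA]
    have hr : homogeneousComponent (m + l) (c * q - A) = 0 := by
      rw [map_sub, hM, hc_self hAhom, sub_self]
    have h0 : diffOp (conjPoly L) (q * c) = 0 := LinearMap.mem_ker.mp hker
    have hsplit : diffOp (conjPoly L) (c * q) = diffOp (conjPoly L) A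
        + diffOp (conjPoly L) (c * q - A) := by
      rw [← map_add]; congr 1; ring
    rw [mul_comm q c] at h0
    have hhc : homogeneousComponent m (diffOp (conjPoly L) (c * q)) = 0 := by
      rw [h0, map_zero]
    rw [hsplit, map_add, hc_diffOp_zero hL hr, add_zero] at hhc
    have hAm : (diffOp (conjPoly L) A).IsHomogeneous m :=
      diffOp_conj_isHomogeneous hL hAhom
    rw [hc_self hAm] at hhc
    have : diffOp (conjPoly L) (L * homogeneousComponent m c) ≠ 0 :=
      diff_mul_ne_zero hL0 htop
    rw [mul_comm] at this
    exact this (by rw [← hA]; exact hhc)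

end FischerAux

open FischerAux

theorem pde_solutions_have_ideal_complement {d : ℕ} :
    (∀ (l : ℕ) (L : MvPolynomial (Fin d) ℂ), L ≠ 0 → L.IsHomogeneous l →
      ∀ q : MvPolynomial (Fin d) ℂ, homogeneousComponent q.totalDegree q = L →
        IsCompl (LinearMap.ker (diffOp (conjPoly L))) ((Ideal.span {q}).restrictScalars ℂ)) ∧
    IsCompl (LinearMap.ker (diffOp (∑ j : Fin d, (X j : MvPolynomial (Fin d) ℂ) ^ 2)))
      ((Ideal.span {∑ j : Fin d, (X j : MvPolynomial (Fin d) ℂ) ^ 2}).restrictScalars ℂ) := by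
  have main : ∀ (l : ℕ) (L : MvPolynomial (Fin d) ℂ), L ≠ 0 → L.IsHomogeneous l →
      ∀ q : MvPolynomial (Fin d) ℂ, homogeneousComponent q.totalDegree q = L →
        IsCompl (LinearMap.ker (diffOp (conjPoly L))) ((Ideal.span {q}).restrictScalars ℂ) := by
    intro l L hL0 hL q hq
    constructor
    · exact Submodule.disjoint_def.mpr (disjoint_ker_span hL0 hL hq)
    · rw [codisjoint_iff]
      exact Submodule.eq_top_iff'.mpr
        (fun f => mem_sup_of_deg_le hL0 hL hq f.totalDegree f le_rfl)
  refine ⟨main, ?_⟩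
  set Q : MvPolynomial (Fin d) ℂ := ∑ j : Fin d, (X j : MvPolynomial (Fin d) ℂ) ^ 2 with hQdef
  have hconj : conjPoly Q = Q := by
    rw [conjPoly, hQdef, map_sum]
    apply Finset.sum_congr rfl
    intro j _
    rw [map_pow, MvPolynomial.map_X]
  by_cases hQ0 : Q = 0
  · rw [hQ0]
    have h1 : diffOp (0 : MvPolynomial (Fin d) ℂ) = 0 := by
      rw [diffOp_eq_Pop]
      simp
    rw [h1, Ideal.span_singleton_eq_bot.mpr rfl, LinearMap.ker_zero,
      Submodule.restrictScalars_bot]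
    exact isCompl_top_bot
  · have hhom : Q.IsHomogeneous 2 := by
      apply MvPolynomial.IsHomogeneous.sum
      intro j _
      simpa using (isHomogeneous_X ℂ j).pow 2
    have htop : homogeneousComponent Q.totalDegree Q = Q := by
      rw [hhom.totalDegree hQ0]
      exact hc_self hhom
    have h2 := main 2 Q hQ0 hhom Q htop
    rwa [hconj] at h2
end
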